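/- arXiv:1808.03236 — 6 statements merged into one kernel-verified Lean document; each statement's English description precedes it below -/
import Mathlib

section
/- Let U ⊆ ℝ × ℝ be open, u : ℝ × ℝ → ℝ continuous on U, and let φ, ω, θ : ℝ × ℝ → ℝ be twice continuously differentiable on U with ω nonvanishing on U. Assume that on U one has Δφ = u·φ, Δω = u·ω, and the Moutard relations ∂x(ω·θ) = −ω²·∂x₂(φ/ω), ∂y(ω·θ) = ω²·∂x₁(φ/ω) hold (i.e. (ωθ)_x = −ω²(φ/ω)_y and (ωθ)_y = ω²(φ/ω)_x). Then on U the function θ satisfies the transformed Schrödinger equation Δθ = ũ·θ, where ũ = −u + 2·(ω_x² + ω_y²)/ω². -/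
open Filter


/-- Partial derivative of `f` at `p` in direction `v`. -/
noncomputable def pd (v : ℝ × ℝ) (f : ℝ × ℝ → ℝ) (p : ℝ × ℝ) : ℝ :=
  fderiv ℝ f p v

/-- Laplacian of `f` at `p`. -/
noncomputable def lap (f : ℝ × ℝ → ℝ) (p : ℝ × ℝ) : ℝ :=
  pd (1, 0) (pd (1, 0) f) p + pd (0, 1) (pd (0, 1) f) p

private lemma pd_congr {f g : ℝ × ℝ → ℝ} {p : ℝ × ℝ} (v : ℝ × ℝ)
    (h : f =ᶠ[nhds p] g) : pd v f p = pd v g p := by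
  unfold pd; rw [h.fderiv_eq]

private lemma pd_add {f g : ℝ × ℝ → ℝ} {p : ℝ × ℝ} (v : ℝ × ℝ)
    (hf : DifferentiableAt ℝ f p) (hg : DifferentiableAt ℝ g p) :
    pd v (fun q => f q + g q) p = pd v f p + pd v g p := by
  unfold pd; rw [fderiv_fun_add hf hg]; simp

private lemma pd_mul {f g : ℝ × ℝ → ℝ} {p : ℝ × ℝ} (v : ℝ × ℝ)
    (hf : DifferentiableAt ℝ f p) (hg : DifferentiableAt ℝ g p) :
    pd v (fun q => f q * g q) p = pd v f p * g p + f p * pd v g p := by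
  unfold pd; rw [fderiv_fun_mul hf hg]; simp; ring

private lemma pd_neg {f : ℝ × ℝ → ℝ} {p : ℝ × ℝ} (v : ℝ × ℝ) :
    pd v (fun q => -f q) p = -pd v f p := by
  unfold pd; rw [fderiv_fun_neg]; simp

private lemma pd_diffAt {f : ℝ × ℝ → ℝ} {p : ℝ × ℝ} (v : ℝ × ℝ)
    (hf : ContDiffAt ℝ 2 f p) : DifferentiableAt ℝ (pd v f) p := by
  have h1 : ContDiffAt ℝ 1 (fderiv ℝ f) p := hf.fderiv_right (by norm_num)
  exact (h1.differentiableAt one_ne_zero).clm_apply (differentiableAt_const v)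

private lemma pd_pd_eq {f : ℝ × ℝ → ℝ} {p : ℝ × ℝ} (v w : ℝ × ℝ)
    (hf : ContDiffAt ℝ 2 f p) :
    pd w (pd v f) p = fderiv ℝ (fderiv ℝ f) p w v := by
  have h1 : DifferentiableAt ℝ (fderiv ℝ f) p :=
    (hf.fderiv_right (m := 1) (by norm_num)).differentiableAt one_ne_zero
  unfold pd
  rw [fderiv_clm_apply h1 (differentiableAt_const v)]
  simp

private lemma pd_comm {f : ℝ × ℝ → ℝ} {p : ℝ × ℝ} (v w : ℝ × ℝ)
    (hf : ContDiffAt ℝ 2 f p) :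
    pd w (pd v f) p = pd v (pd w f) p := by
  rw [pd_pd_eq v w hf, pd_pd_eq w v hf]
  exact (hf.isSymmSndFDerivAt (by norm_num)).eq w v

/-- the Moutard transform `θ` of a solution `φ` satisfies the
Schrödinger equation with the transformed potential `ũ = -u + 2(ω_x² + ω_y²)/ω²`. -/
theorem moutard_transform_solves_transformed_equation
    (U : Set (ℝ × ℝ)) (hU : IsOpen U)
    (u φ ω θ : ℝ × ℝ → ℝ)
    (hu : ContinuousOn u U)
    (hφ : ContDiffOn ℝ 2 φ U)
    (hω : ContDiffOn ℝ 2 ω U)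
    (hθ : ContDiffOn ℝ 2 θ U)
    (hω0 : ∀ p ∈ U, ω p ≠ 0)
    (hφeq : ∀ p ∈ U, lap φ p = u p * φ p)
    (hωeq : ∀ p ∈ U, lap ω p = u p * ω p)
    (hMx : ∀ p ∈ U,
      pd (1, 0) (fun q => ω q * θ q) p
        = -((ω p) ^ 2) * pd (0, 1) (fun q => φ q / ω q) p)
    (hMy : ∀ p ∈ U,
      pd (0, 1) (fun q => ω q * θ q) p
        = (ω p) ^ 2 * pd (1, 0) (fun q => φ q / ω q) p) :
    ∀ p ∈ U,
      lap θ p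
        = (-(u p) + 2 * ((pd (1, 0) ω p) ^ 2 + (pd (0, 1) ω p) ^ 2) / (ω p) ^ 2)
            * θ p := by
  set x : ℝ × ℝ := (1, 0)
  set y : ℝ × ℝ := (0, 1)
  set g : ℝ × ℝ → ℝ := fun q => φ q / ω q with hgdef
  set ψ : ℝ × ℝ → ℝ := fun q => ω q * θ q with hψdef
  have hg : ContDiffOn ℝ 2 g U := hφ.div hω hω0
  intro p hp
  have hmem : U ∈ nhds p := hU.mem_nhds hp
  have hωp : ContDiffAt ℝ 2 ω p := hω.contDiffAt hmem
  have hθp : ContDiffAt ℝ 2 θ p := hθ.contDiffAt hmem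
  have hgp : ContDiffAt ℝ 2 g p := hg.contDiffAt hmem
  have hωd : DifferentiableAt ℝ ω p := hωp.differentiableAt two_ne_zero
  have hθd : DifferentiableAt ℝ θ p := hθp.differentiableAt two_ne_zero
  -- product rule for ψ on all of U
  have hψv : ∀ v : ℝ × ℝ, ∀ q ∈ U, pd v ψ q = pd v ω q * θ q + ω q * pd v θ q := by
    intro v q hq
    have hmq : U ∈ nhds q := hU.mem_nhds hq
    exact pd_mul v ((hω.contDiffAt hmq).differentiableAt two_ne_zero)
      ((hθ.contDiffAt hmq).differentiableAt two_ne_zero)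
  -- second derivatives of ψ via product rule, at p
  have hψvw : ∀ v w : ℝ × ℝ, pd w (pd v ψ) p
      = pd w (pd v ω) p * θ p + pd v ω p * pd w θ p
        + pd w ω p * pd v θ p + ω p * pd w (pd v θ) p := by
    intro v w
    have he : pd v ψ =ᶠ[nhds p] fun q => pd v ω q * θ q + ω q * pd v θ q := by
      filter_upwards [hmem] with q hq using hψv v q hq
    rw [pd_congr w he,
      pd_add (f := fun q => pd v ω q * θ q) (g := fun q => ω q * pd v θ q) w (((pd_diffAt v hωp)).mul hθd) (hωd.mul (pd_diffAt v hθp)),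
      pd_mul w (pd_diffAt v hωp) hθd, pd_mul w hωd (pd_diffAt v hθp)]
    ring
  -- second derivatives of ψ via Moutard, at p
  have hsq : ∀ v : ℝ × ℝ, pd v (fun q => -((ω q) ^ 2)) p = -(2 * ω p * pd v ω p) := by
    intro v
    have : (fun q => -((ω q) ^ 2)) = fun q => -(ω q * ω q) := by
      funext q; ring
    rw [this, pd_neg v, pd_mul v hωd hωd]
    ring
  have hsq' : ∀ v : ℝ × ℝ, pd v (fun q => (ω q) ^ 2) p = 2 * ω p * pd v ω p := by
    intro v
    have : (fun q => ((ω q) ^ 2)) = fun q => ω q * ω q := by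
      funext q; ring
    rw [this, pd_mul v hωd hωd]; ring
  have hω2d : DifferentiableAt ℝ (fun q => -((ω q) ^ 2)) p := ((hωd.pow 2).neg)
  have hω2d' : DifferentiableAt ℝ (fun q => ((ω q) ^ 2)) p := (hωd.pow 2)
  have hXX2 : pd x (pd x ψ) p
      = -(2 * ω p * pd x ω p) * pd y g p + (-((ω p) ^ 2)) * pd x (pd y g) p := by
    have he : pd x ψ =ᶠ[nhds p] fun q => (-((ω q) ^ 2)) * pd y g q := by
      filter_upwards [hmem] with q hq using hMx q hq
    rw [pd_congr x he, pd_mul x hω2d (pd_diffAt y hgp), hsq x]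
  have hYY2 : pd y (pd y ψ) p
      = (2 * ω p * pd y ω p) * pd x g p + ((ω p) ^ 2) * pd y (pd x g) p := by
    have he : pd y ψ =ᶠ[nhds p] fun q => ((ω q) ^ 2) * pd x g q := by
      filter_upwards [hmem] with q hq using hMy q hq
    rw [pd_congr y he, pd_mul y hω2d' (pd_diffAt x hgp), hsq' y]
  have hsymm : pd x (pd y g) p = pd y (pd x g) p := pd_comm y x hgp
  -- Moutard at p, combined with product rule
  have hgx : (ω p) ^ 2 * pd x g p = pd y ω p * θ p + ω p * pd y θ p := by
    rw [← hMy p hp]; exact hψv y p hp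
  have hgy : -((ω p) ^ 2) * pd y g p = pd x ω p * θ p + ω p * pd x θ p := by
    rw [← hMx p hp]; exact hψv x p hp
  have hlapω : pd x (pd x ω) p + pd y (pd y ω) p = u p * ω p := hωeq p hp
  have hω0p : ω p ≠ 0 := hω0 p hp
  have key : (ω p) ^ 2 * (pd x (pd x θ) p + pd y (pd y θ) p)
      = (-(u p) * (ω p) ^ 2 + 2 * ((pd x ω p) ^ 2 + (pd y ω p) ^ 2)) * θ p := by
    have e1 := hψvw x x
    have e2 := hψvw y y
    linear_combination (ω p) * (hXX2 - e1) + (ω p) * (hYY2 - e2)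
      + 2 * pd x ω p * hgy + 2 * pd y ω p * hgx - (ω p) * θ p * hlapω
      - (ω p) ^ 3 * hsymm
  show pd x (pd x θ) p + pd y (pd y θ) p
      = (-(u p) + 2 * ((pd x ω p) ^ 2 + (pd y ω p) ^ 2) / (ω p) ^ 2) * θ p
  field_simp
  linear_combination key
end

section
/- Let U ⊆ ℝ × ℝ be open and connected, let ω : ℝ × ℝ → ℝ be continuously differentiable and nonvanishing on U, let φ : ℝ × ℝ → ℝ be continuously differentiable on U, and let θ₁, θ₂ : ℝ × ℝ → ℝ be differentiable on U, both satisfying the Moutard relations with respect to (φ, ω): (ω·θᵢ)_x = −ω²·(φ/ω)_y and (ω·θᵢ)_y = ω²·(φ/ω)_x on U for i = 1, 2. Then there exists a constant C ∈ ℝ such that θ₂ = θ₁ + C/ω on U; i.e. the Moutard relations determine θ up to a summand C/ω. -/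
/-- on an open connected set, the Moutard relations determine `θ`
up to a summand `C/ω`. -/
theorem moutard_theta_unique_up_to_C_over_omega
    (U : Set (ℝ × ℝ)) (hU : IsOpen U) (hUconn : IsConnected U)
    (φ ω θ₁ θ₂ : ℝ × ℝ → ℝ)
    (hω : ContDiffOn ℝ 1 ω U)
    (hω0 : ∀ p ∈ U, ω p ≠ 0)
    (hφ : ContDiffOn ℝ 1 φ U)
    (hθ₁ : DifferentiableOn ℝ θ₁ U)
    (hθ₂ : DifferentiableOn ℝ θ₂ U)
    (hMx₁ : ∀ p ∈ U,
      pd (1, 0) (fun q => ω q * θ₁ q) p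
        = -((ω p) ^ 2) * pd (0, 1) (fun q => φ q / ω q) p)
    (hMy₁ : ∀ p ∈ U,
      pd (0, 1) (fun q => ω q * θ₁ q) p
        = (ω p) ^ 2 * pd (1, 0) (fun q => φ q / ω q) p)
    (hMx₂ : ∀ p ∈ U,
      pd (1, 0) (fun q => ω q * θ₂ q) p
        = -((ω p) ^ 2) * pd (0, 1) (fun q => φ q / ω q) p)
    (hMy₂ : ∀ p ∈ U,
      pd (0, 1) (fun q => ω q * θ₂ q) p
        = (ω p) ^ 2 * pd (1, 0) (fun q => φ q / ω q) p) :
    ∃ C : ℝ, ∀ p ∈ U, θ₂ p = θ₁ p + C / ω p := by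
  set g : ℝ × ℝ → ℝ := fun q => ω q * θ₂ q - ω q * θ₁ q with hg
  have hωd : DifferentiableOn ℝ ω U := hω.differentiableOn one_ne_zero
  have hgdiff : ∀ p ∈ U, DifferentiableAt ℝ g p := by
    intro p hp
    have h2 : DifferentiableAt ℝ (fun q => ω q * θ₂ q) p :=
      ((hωd p hp).differentiableAt (hU.mem_nhds hp)).mul
        ((hθ₂ p hp).differentiableAt (hU.mem_nhds hp))
    have h1 : DifferentiableAt ℝ (fun q => ω q * θ₁ q) p :=
      ((hωd p hp).differentiableAt (hU.mem_nhds hp)).mul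
        ((hθ₁ p hp).differentiableAt (hU.mem_nhds hp))
    exact h2.sub h1
  have hfz : ∀ p ∈ U, fderiv ℝ g p = 0 := by
    intro p hp
    have h2 : DifferentiableAt ℝ (fun q => ω q * θ₂ q) p :=
      ((hωd p hp).differentiableAt (hU.mem_nhds hp)).mul
        ((hθ₂ p hp).differentiableAt (hU.mem_nhds hp))
    have h1 : DifferentiableAt ℝ (fun q => ω q * θ₁ q) p :=
      ((hωd p hp).differentiableAt (hU.mem_nhds hp)).mul
        ((hθ₁ p hp).differentiableAt (hU.mem_nhds hp))
    have hsub : fderiv ℝ g p =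
        fderiv ℝ (fun q => ω q * θ₂ q) p - fderiv ℝ (fun q => ω q * θ₁ q) p :=
      fderiv_sub h2 h1
    have hx : fderiv ℝ g p (1, 0) = 0 := by
      rw [hsub]
      simp only [ContinuousLinearMap.sub_apply]
      have := hMx₂ p hp
      have := hMx₁ p hp
      simp only [pd] at *
      linarith
    have hy : fderiv ℝ g p (0, 1) = 0 := by
      rw [hsub]
      simp only [ContinuousLinearMap.sub_apply]
      have := hMy₂ p hp
      have := hMy₁ p hp
      simp only [pd] at *
      linarith
    ext
    · simpa using hx
    · simpa using hy
  -- g is locally constant on U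
  have hloc : ∀ p ∈ U, ∃ r > 0, Metric.ball p r ⊆ U ∧
      ∀ q ∈ Metric.ball p r, g q = g p := by
    intro p hp
    obtain ⟨r, hr, hball⟩ := Metric.isOpen_iff.1 hU p hp
    refine ⟨r, hr, hball, fun q hq => ?_⟩
    have hconv : Convex ℝ (Metric.ball p r) := convex_ball p r
    refine hconv.is_const_of_fderivWithin_eq_zero
      (fun z hz => (hgdiff z (hball hz)).differentiableWithinAt)
      (fun z hz => ?_) hq (Metric.mem_ball_self hr)
    rw [fderivWithin_of_isOpen Metric.isOpen_ball hz]
    exact hfz z (hball hz)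
  obtain ⟨p₀, hp₀⟩ := hUconn.nonempty
  set c := g p₀ with hc
  set u : Set (ℝ × ℝ) := {p | ∃ r > 0, Metric.ball p r ⊆ U ∧
      ∀ q ∈ Metric.ball p r, g q = c} with hu
  set v : Set (ℝ × ℝ) := {p | ∃ r > 0, Metric.ball p r ⊆ U ∧
      ∀ q ∈ Metric.ball p r, g q ≠ c} with hv
  have huo : IsOpen u := by
    refine Metric.isOpen_iff.2 fun p hp => ?_
    obtain ⟨r, hr, hbU, hconst⟩ := hp
    refine ⟨r, hr, fun q hq => ?_⟩
    obtain ⟨s, hs, hsub, hle⟩ : ∃ s > 0, Metric.ball q s ⊆ Metric.ball p r ∧ True := by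
      refine ⟨r - dist q p, by simpa using hq, fun z hz => ?_, trivial⟩
      · have := Metric.mem_ball.1 hz
        exact Metric.mem_ball.2 (by
          calc dist z p ≤ dist z q + dist q p := dist_triangle _ _ _
          _ < (r - dist q p) + dist q p := by linarith
          _ = r := by ring)
    exact ⟨s, hs, hsub.trans hbU, fun z hz => hconst z (hsub hz)⟩
  have hvo : IsOpen v := by
    refine Metric.isOpen_iff.2 fun p hp => ?_
    obtain ⟨r, hr, hbU, hne⟩ := hp
    refine ⟨r, hr, fun q hq => ?_⟩
    refine ⟨r - dist q p, by simpa using hq, ?_, ?_⟩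
    · intro z hz
      apply hbU
      have := Metric.mem_ball.1 hz
      exact Metric.mem_ball.2 (by
        calc dist z p ≤ dist z q + dist q p := dist_triangle _ _ _
        _ < (r - dist q p) + dist q p := by linarith
        _ = r := by ring)
    · intro z hz
      apply hne
      have := Metric.mem_ball.1 hz
      exact Metric.mem_ball.2 (by
        calc dist z p ≤ dist z q + dist q p := dist_triangle _ _ _
        _ < (r - dist q p) + dist q p := by linarith
        _ = r := by ring)
  have hdisj : Disjoint u v := by
    rw [Set.disjoint_left]
    rintro p ⟨r, hr, _, hconst⟩ ⟨s, hs, _, hne⟩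
    exact hne p (Metric.mem_ball_self hs) (hconst p (Metric.mem_ball_self hr))
  have hcover : U ⊆ u ∪ v := by
    intro p hp
    obtain ⟨r, hr, hbU, hconst⟩ := hloc p hp
    by_cases h : g p = c
    · exact Or.inl ⟨r, hr, hbU, fun q hq => (hconst q hq).trans h⟩
    · exact Or.inr ⟨r, hr, hbU, fun q hq => (hconst q hq) ▸ h⟩
  have hnon : (U ∩ u).Nonempty := by
    obtain ⟨r, hr, hbU, hconst⟩ := hloc p₀ hp₀
    exact ⟨p₀, hp₀, ⟨r, hr, hbU, fun q hq => hconst q hq⟩⟩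
  have hUu : U ⊆ u :=
    hUconn.isPreconnected.subset_left_of_subset_union huo hvo hdisj hcover hnon
  refine ⟨c, fun p hp => ?_⟩
  obtain ⟨r, hr, _, hconst⟩ := hUu hp
  have hgp : g p = c := hconst p (Metric.mem_ball_self hr)
  have hωp := hω0 p hp
  have : ω p * θ₂ p - ω p * θ₁ p = c := hgp
  field_simp
  linarith [this]
end

section
/- Let φ, ω, θ : ℝ × ℝ → ℝ be differentiable at a point p ∈ ℝ × ℝ with ω(p) ≠ 0, and suppose the Moutard relations hold at p: the gradient of ωθ at p equals (−ω²·(φ/ω)_y, ω²·(φ/ω)_x)(p). Let ν = (ν₁, ν₂) ∈ ℝ × ℝ be a unit vector and set τ = (−ν₂, ν₁). For a vector v, write D_v f for the directional derivative of f along v at p. Then at p the following two boundary identities hold: D_ν θ + (D_ν ω / ω)·θ = −( D_τ φ − (D_τ ω / ω)·φ ), and D_τ θ + (D_τ ω / ω)·θ = D_ν φ − (D_ν ω / ω)·φ. (These are the relations Γ^ν_{1/ω}θ = −Γ^τ_ω φ and Γ^τ_{1/ω}θ = Γ^ν_ω φ, where Γ^v_w f := D_v f − (D_v w / w)·f.)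 -/
/-- the Moutard relations at a point imply the boundary identities
`Γ^ν_{1/ω} θ = -Γ^τ_ω φ` and `Γ^τ_{1/ω} θ = Γ^ν_ω φ`, where the directional
derivative `D_v f` is `fderiv ℝ f p v` and `Γ^v_w f = D_v f - (D_v w / w) · f`. -/
theorem moutard_boundary_identities
    (φ ω θ : ℝ × ℝ → ℝ) (p : ℝ × ℝ)
    (hφ : DifferentiableAt ℝ φ p)
    (hω : DifferentiableAt ℝ ω p)
    (hθ : DifferentiableAt ℝ θ p)
    (hω0 : ω p ≠ 0)
    (ν : ℝ × ℝ) (hν : ν.1 ^ 2 + ν.2 ^ 2 = 1)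
    (hMx : fderiv ℝ (fun q => ω q * θ q) p (1, 0)
      = -((ω p) ^ 2) * fderiv ℝ (fun q => φ q / ω q) p (0, 1))
    (hMy : fderiv ℝ (fun q => ω q * θ q) p (0, 1)
      = (ω p) ^ 2 * fderiv ℝ (fun q => φ q / ω q) p (1, 0)) :
    (fderiv ℝ θ p ν + (fderiv ℝ ω p ν / ω p) * θ p
        = -(fderiv ℝ φ p (-ν.2, ν.1) - (fderiv ℝ ω p (-ν.2, ν.1) / ω p) * φ p))
    ∧ (fderiv ℝ θ p (-ν.2, ν.1) + (fderiv ℝ ω p (-ν.2, ν.1) / ω p) * θ p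
        = fderiv ℝ φ p ν - (fderiv ℝ ω p ν / ω p) * φ p) := by
  set A := fderiv ℝ φ p
  set B := fderiv ℝ ω p
  set C := fderiv ℝ θ p
  have hinv : HasFDerivAt (fun q => (ω q)⁻¹)
      ((ContinuousLinearMap.smulRight (1 : ℝ →L[ℝ] ℝ) (-(ω p ^ 2)⁻¹)).comp B) p :=
    (hasFDerivAt_inv hω0).comp p hω.hasFDerivAt
  have hdiv : HasFDerivAt (fun q => φ q / ω q)
      (φ p • ((ContinuousLinearMap.smulRight (1 : ℝ →L[ℝ] ℝ) (-(ω p ^ 2)⁻¹)).comp B)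
        + (ω p)⁻¹ • A) p := by
    simp only [div_eq_mul_inv]
    exact hφ.hasFDerivAt.mul hinv
  have hq : ∀ v, fderiv ℝ (fun q => φ q / ω q) p v
      = (A v * ω p - φ p * B v) / ω p ^ 2 := by
    intro v
    rw [hdiv.fderiv]
    simp only [ContinuousLinearMap.add_apply, ContinuousLinearMap.smul_apply,
      ContinuousLinearMap.comp_apply, ContinuousLinearMap.smulRight_apply,
      ContinuousLinearMap.one_apply, smul_eq_mul]
    field_simp
    ring
  have hm : ∀ v, fderiv ℝ (fun q => ω q * θ q) p v = ω p * C v + θ p * B v := by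
    intro v
    rw [fderiv_fun_mul hω hθ]
    simp [smul_eq_mul]
    rfl
  rw [hm, hq, neg_mul, mul_div_cancel₀ _ (pow_ne_zero 2 hω0)] at hMx
  rw [hm, hq, mul_div_cancel₀ _ (pow_ne_zero 2 hω0)] at hMy
  have hexp : ∀ (L : ℝ × ℝ →L[ℝ] ℝ) (v : ℝ × ℝ), L v = v.1 * L (1, 0) + v.2 * L (0, 1) := by
    intro L v
    have hv : v = v.1 • ((1 : ℝ), (0 : ℝ)) + v.2 • ((0 : ℝ), (1 : ℝ)) := by
      simp [Prod.ext_iff]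
    conv_lhs => rw [hv]
    simp only [map_add, map_smul, smul_eq_mul]
  constructor
  · rw [hexp C ν, hexp B ν, hexp A (-ν.2, ν.1), hexp B (-ν.2, ν.1)]
    field_simp
    linear_combination ν.1 * hMx + ν.2 * hMy
  · rw [hexp C (-ν.2, ν.1), hexp B (-ν.2, ν.1), hexp A ν, hexp B ν]
    field_simp
    linear_combination -ν.2 * hMx + ν.1 * hMy
end

section
/- Let I ⊆ ℝ be open, u : ℝ → ℝ continuously differentiable on I, κ, μ ∈ ℝ with μ + κ ≠ 0. Let ω₁ : ℝ → ℝ be three times continuously differentiable and nonvanishing on I with −ω₁'' + u·ω₁ = κ²·ω₁ on I, and let φ₁ : ℝ → ℝ be three times continuously differentiable on I with −φ₁'' + u·φ₁ = μ²·φ₁ on I. Define the Darboux transform θ₁ := (1/(μ + κ))·(φ₁' − (ω₁'/ω₁)·φ₁) and the transformed potential ũ := u − 2·(ω₁''/ω₁ − (ω₁'/ω₁)²). Then −θ₁'' + ũ·θ₁ = μ²·θ₁ on I. -/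
/-- the Darboux transform
`θ₁ = (1/(μ+κ)) (φ₁' - (ω₁'/ω₁) φ₁)` of a solution `φ₁` of `-φ₁'' + u φ₁ = μ² φ₁`
satisfies `-θ₁'' + ũ θ₁ = μ² θ₁` with `ũ = u - 2 (ω₁''/ω₁ - (ω₁'/ω₁)²)`. -/
theorem darboux_transform_solves_transformed_equation
    (I : Set ℝ) (hI : IsOpen I)
    (u ω₁ φ₁ : ℝ → ℝ) (κ μ : ℝ)
    (hμκ : μ + κ ≠ 0)
    (hu : ContDiffOn ℝ 1 u I)
    (hω₁ : ContDiffOn ℝ 3 ω₁ I)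
    (hω₁0 : ∀ x ∈ I, ω₁ x ≠ 0)
    (hω₁eq : ∀ x ∈ I, -(deriv (deriv ω₁) x) + u x * ω₁ x = κ ^ 2 * ω₁ x)
    (hφ₁ : ContDiffOn ℝ 3 φ₁ I)
    (hφ₁eq : ∀ x ∈ I, -(deriv (deriv φ₁) x) + u x * φ₁ x = μ ^ 2 * φ₁ x) :
    ∀ x ∈ I,
      -(deriv (deriv (fun y =>
          (1 / (μ + κ)) * (deriv φ₁ y - (deriv ω₁ y / ω₁ y) * φ₁ y))) x)
        + (u x - 2 * (deriv (deriv ω₁) x / ω₁ x - (deriv ω₁ x / ω₁ x) ^ 2))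
            * ((1 / (μ + κ)) * (deriv φ₁ x - (deriv ω₁ x / ω₁ x) * φ₁ x))
        = μ ^ 2 * ((1 / (μ + κ)) * (deriv φ₁ x - (deriv ω₁ x / ω₁ x) * φ₁ x)) := by
  intro x hx
  have hd : ∀ f : ℝ → ℝ, ContDiffOn ℝ 1 f I → ∀ y ∈ I, HasDerivAt f (deriv f y) y := by
    intro f hf y hy
    exact ((hf.differentiableOn one_ne_zero).differentiableAt (hI.mem_nhds hy)).hasDerivAt
  have hω : ∀ y ∈ I, HasDerivAt ω₁ (deriv ω₁ y) y :=
    hd ω₁ (hω₁.of_le (by norm_num))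
  have hω' : ∀ y ∈ I, HasDerivAt (deriv ω₁) (deriv (deriv ω₁) y) y :=
    hd _ (((hω₁.deriv_of_isOpen hI (by norm_num) : ContDiffOn ℝ 2 (deriv ω₁) I)).of_le (by norm_num))
  have hφ : ∀ y ∈ I, HasDerivAt φ₁ (deriv φ₁ y) y :=
    hd φ₁ (hφ₁.of_le (by norm_num))
  have hφ' : ∀ y ∈ I, HasDerivAt (deriv φ₁) (deriv (deriv φ₁) y) y :=
    hd _ (((hφ₁.deriv_of_isOpen hI (by norm_num) : ContDiffOn ℝ 2 (deriv φ₁) I)).of_le (by norm_num))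
  have hv : ∀ y ∈ I, HasDerivAt (fun z => deriv ω₁ z / ω₁ z)
      ((deriv (deriv ω₁) y * ω₁ y - deriv ω₁ y * deriv ω₁ y) / (ω₁ y) ^ 2) y :=
    fun y hy => (hω' y hy).div (hω y hy) (hω₁0 y hy)
  have hg : ∀ y ∈ I, HasDerivAt (fun z => deriv φ₁ z - (deriv ω₁ z / ω₁ z) * φ₁ z)
      (deriv (deriv φ₁) y -
        (((deriv (deriv ω₁) y * ω₁ y - deriv ω₁ y * deriv ω₁ y) / (ω₁ y) ^ 2) * φ₁ y
          + (deriv ω₁ y / ω₁ y) * deriv φ₁ y)) y :=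
    fun y hy => (hφ' y hy).sub ((hv y hy).mul (hφ y hy))
  have hθ : ∀ y ∈ I, HasDerivAt (fun y =>
      (1 / (μ + κ)) * (deriv φ₁ y - (deriv ω₁ y / ω₁ y) * φ₁ y))
      ((1 / (μ + κ)) * (deriv (deriv φ₁) y -
        (((deriv (deriv ω₁) y * ω₁ y - deriv ω₁ y * deriv ω₁ y) / (ω₁ y) ^ 2) * φ₁ y
          + (deriv ω₁ y / ω₁ y) * deriv φ₁ y))) y :=
    fun y hy => (hg y hy).const_mul _
  -- second order deriv values from the ODEs
  have hw2 : ∀ y ∈ I, deriv (deriv ω₁) y = u y * ω₁ y - κ ^ 2 * ω₁ y := by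
    intro y hy; have := hω₁eq y hy; linarith
  have hp2 : ∀ y ∈ I, deriv (deriv φ₁) y = u y * φ₁ y - μ ^ 2 * φ₁ y := by
    intro y hy; have := hφ₁eq y hy; linarith
  -- first derivative of θ simplifies on I
  have hθ'E : ∀ y ∈ I, deriv (fun y =>
      (1 / (μ + κ)) * (deriv φ₁ y - (deriv ω₁ y / ω₁ y) * φ₁ y)) y
      = (1 / (μ + κ)) * ((κ ^ 2 - μ ^ 2) * φ₁ y
          - (deriv ω₁ y / ω₁ y) * (deriv φ₁ y - (deriv ω₁ y / ω₁ y) * φ₁ y)) := by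
    intro y hy
    rw [(hθ y hy).deriv, hw2 y hy, hp2 y hy]
    have h0 := hω₁0 y hy
    field_simp
    ring
  have heq : deriv (fun y =>
      (1 / (μ + κ)) * (deriv φ₁ y - (deriv ω₁ y / ω₁ y) * φ₁ y))
      =ᶠ[nhds x] fun y => (1 / (μ + κ)) * ((κ ^ 2 - μ ^ 2) * φ₁ y
          - (deriv ω₁ y / ω₁ y) * (deriv φ₁ y - (deriv ω₁ y / ω₁ y) * φ₁ y)) :=
    Filter.eventuallyEq_of_mem (hI.mem_nhds hx) hθ'E
  have hE : HasDerivAt (fun y => (1 / (μ + κ)) * ((κ ^ 2 - μ ^ 2) * φ₁ y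
          - (deriv ω₁ y / ω₁ y) * (deriv φ₁ y - (deriv ω₁ y / ω₁ y) * φ₁ y)))
      ((1 / (μ + κ)) * ((κ ^ 2 - μ ^ 2) * deriv φ₁ x
        - (((deriv (deriv ω₁) x * ω₁ x - deriv ω₁ x * deriv ω₁ x) / (ω₁ x) ^ 2)
            * (deriv φ₁ x - (deriv ω₁ x / ω₁ x) * φ₁ x)
          + (deriv ω₁ x / ω₁ x) * (deriv (deriv φ₁) x -
            (((deriv (deriv ω₁) x * ω₁ x - deriv ω₁ x * deriv ω₁ x) / (ω₁ x) ^ 2) * φ₁ x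
              + (deriv ω₁ x / ω₁ x) * deriv φ₁ x))))) x :=
    (((hφ x hx).const_mul _).sub ((hv x hx).mul (hg x hx))).const_mul _
  rw [heq.deriv_eq, hE.deriv, hw2 x hx, hp2 x hx]
  have h0 := hω₁0 x hx
  field_simp
  ring
end

section
/- Let I ⊆ ℝ be open, u : ℝ → ℝ continuous on I, κ, μ ∈ ℝ with μ + κ ≠ 0. Let ω₁ : ℝ → ℝ be twice continuously differentiable and nonvanishing on I with −ω₁'' + u·ω₁ = κ²·ω₁ on I, and let φ₁ : ℝ → ℝ be twice continuously differentiable on I with −φ₁'' + u·φ₁ = μ²·φ₁ on I. Define θ₁ := (1/(μ + κ))·(φ₁' − (ω₁'/ω₁)·φ₁), and the two-dimensional functions ω(x,y) := e^{κy}·ω₁(x), φ(x,y) := e^{μy}·φ₁(x), θ(x,y) := e^{μy}·θ₁(x). Then (φ, θ) satisfies the Moutard relations with respect to ω on I × ℝ: (ωθ)_x = −ω²·(φ/ω)_y and (ωθ)_y = ω²·(φ/ω)_x. (That is, the Darboux transformation is the one-dimensional reduction of the Moutard transformation with generating solution e^{κy}ω₁(x).) -/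
lemma pd_sep₁ (c : ℝ) (F : ℝ → ℝ) (F' : ℝ) (p : ℝ × ℝ) (hF : HasDerivAt F F' p.1) :
    pd (1,0) (fun q : ℝ×ℝ => Real.exp (c*q.2) * F q.1) p = Real.exp (c*p.2) * F' := by
  have he : HasDerivAt (fun t => Real.exp (c*t)) (Real.exp (c*p.2) * c) p.2 := by
    simpa using ((hasDerivAt_id p.2).const_mul c).exp
  have hE : HasFDerivAt (fun q : ℝ×ℝ => Real.exp (c*q.2))
      ((Real.exp (c*p.2)*c) • ContinuousLinearMap.snd ℝ ℝ ℝ) p :=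
    he.comp_hasFDerivAt p (hasFDerivAt_snd)
  have hFx : HasFDerivAt (fun q : ℝ×ℝ => F q.1)
      (F' • ContinuousLinearMap.fst ℝ ℝ ℝ) p :=
    hF.comp_hasFDerivAt p (hasFDerivAt_fst)
  have hm := hE.mul hFx
  unfold pd
  rw [(show HasFDerivAt (fun q : ℝ×ℝ => Real.exp (c*q.2) * F q.1) _ p from hm).fderiv]
  simp

lemma pd_sep₂ (c : ℝ) (F : ℝ → ℝ) (F' : ℝ) (p : ℝ × ℝ) (hF : HasDerivAt F F' p.1) :
    pd (0,1) (fun q : ℝ×ℝ => Real.exp (c*q.2) * F q.1) p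
      = c * Real.exp (c*p.2) * F p.1 := by
  have he : HasDerivAt (fun t => Real.exp (c*t)) (Real.exp (c*p.2) * c) p.2 := by
    simpa using ((hasDerivAt_id p.2).const_mul c).exp
  have hE : HasFDerivAt (fun q : ℝ×ℝ => Real.exp (c*q.2))
      ((Real.exp (c*p.2)*c) • ContinuousLinearMap.snd ℝ ℝ ℝ) p :=
    he.comp_hasFDerivAt p (hasFDerivAt_snd)
  have hFx : HasFDerivAt (fun q : ℝ×ℝ => F q.1)
      (F' • ContinuousLinearMap.fst ℝ ℝ ℝ) p :=
    hF.comp_hasFDerivAt p (hasFDerivAt_fst)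
  have hm := hE.mul hFx
  unfold pd
  rw [(show HasFDerivAt (fun q : ℝ×ℝ => Real.exp (c*q.2) * F q.1) _ p from hm).fderiv]
  simp
  ring

/-- the Darboux transformation is the one-dimensional reduction
of the Moutard transformation with generating solution `ω(x,y) = e^{κy} ω₁(x)`:
with `φ(x,y) = e^{μy} φ₁(x)` and `θ(x,y) = e^{μy} θ₁(x)`,
`θ₁ = (1/(μ+κ)) (φ₁' - (ω₁'/ω₁) φ₁)`, the pair `(φ, θ)` satisfies the Moutard
relations with respect to `ω` on `I × ℝ`. -/
theorem darboux_is_reduction_of_moutard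
    (I : Set ℝ) (hI : IsOpen I)
    (u ω₁ φ₁ : ℝ → ℝ) (κ μ : ℝ)
    (hμκ : μ + κ ≠ 0)
    (hu : ContinuousOn u I)
    (hω₁ : ContDiffOn ℝ 2 ω₁ I)
    (hω₁0 : ∀ x ∈ I, ω₁ x ≠ 0)
    (hω₁eq : ∀ x ∈ I, -(deriv (deriv ω₁) x) + u x * ω₁ x = κ ^ 2 * ω₁ x)
    (hφ₁ : ContDiffOn ℝ 2 φ₁ I)
    (hφ₁eq : ∀ x ∈ I, -(deriv (deriv φ₁) x) + u x * φ₁ x = μ ^ 2 * φ₁ x)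
    (ω φ θ : ℝ × ℝ → ℝ)
    (hω : ω = fun p => Real.exp (κ * p.2) * ω₁ p.1)
    (hφ : φ = fun p => Real.exp (μ * p.2) * φ₁ p.1)
    (hθ : θ = fun p => Real.exp (μ * p.2) *
      ((1 / (μ + κ)) * (deriv φ₁ p.1 - (deriv ω₁ p.1 / ω₁ p.1) * φ₁ p.1))) :
    ∀ p ∈ I ×ˢ (Set.univ : Set ℝ),
      pd (1, 0) (fun q => ω q * θ q) p
          = -((ω p) ^ 2) * pd (0, 1) (fun q => φ q / ω q) p
      ∧ pd (0, 1) (fun q => ω q * θ q) p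
          = (ω p) ^ 2 * pd (1, 0) (fun q => φ q / ω q) p := by
  subst hω hφ hθ
  intro p hp
  have hx : p.1 ∈ I := hp.1
  -- basic differentiability
  have hcA : ContDiffAt ℝ 2 ω₁ p.1 := hω₁.contDiffAt (hI.mem_nhds hx)
  have hcB : ContDiffAt ℝ 2 φ₁ p.1 := hφ₁.contDiffAt (hI.mem_nhds hx)
  have hA1 : HasDerivAt ω₁ (deriv ω₁ p.1) p.1 :=
    (hcA.differentiableAt (by norm_num)).hasDerivAt
  have hB1 : HasDerivAt φ₁ (deriv φ₁ p.1) p.1 :=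
    (hcB.differentiableAt (by norm_num)).hasDerivAt
  have hA2 : HasDerivAt (deriv ω₁) (deriv (deriv ω₁) p.1) p.1 :=
    (((((hω₁.deriv_of_isOpen hI (by norm_num) : ContDiffOn ℝ 1 (deriv ω₁) I)).contDiffAt
      (hI.mem_nhds hx)).differentiableAt (by norm_num)).hasDerivAt)
  have hB2 : HasDerivAt (deriv φ₁) (deriv (deriv φ₁) p.1) p.1 :=
    (((((hφ₁.deriv_of_isOpen hI (by norm_num) : ContDiffOn ℝ 1 (deriv φ₁) I)).contDiffAt
      (hI.mem_nhds hx)).differentiableAt (by norm_num)).hasDerivAt)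
  have hA0 : ω₁ p.1 ≠ 0 := hω₁0 p.1 hx
  -- ODE values
  have hAeq : deriv (deriv ω₁) p.1 = u p.1 * ω₁ p.1 - κ^2 * ω₁ p.1 := by
    have := hω₁eq p.1 hx; linarith
  have hBeq : deriv (deriv φ₁) p.1 = u p.1 * φ₁ p.1 - μ^2 * φ₁ p.1 := by
    have := hφ₁eq p.1 hx; linarith
  -- rewrite the 2D functions in separated form
  have hωθ : (fun q : ℝ×ℝ => (Real.exp (κ * q.2) * ω₁ q.1) *
        (Real.exp (μ * q.2) *
          ((1 / (μ + κ)) * (deriv φ₁ q.1 - (deriv ω₁ q.1 / ω₁ q.1) * φ₁ q.1))))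
      = fun q : ℝ×ℝ => Real.exp ((κ+μ)*q.2) *
          (ω₁ q.1 * ((1 / (μ + κ)) * (deriv φ₁ q.1 - (deriv ω₁ q.1 / ω₁ q.1) * φ₁ q.1))) := by
    funext q
    rw [show (κ+μ)*q.2 = κ*q.2 + μ*q.2 by ring, Real.exp_add]
    ring
  have hφω : (fun q : ℝ×ℝ => (Real.exp (μ * q.2) * φ₁ q.1) /
        (Real.exp (κ * q.2) * ω₁ q.1))
      = fun q : ℝ×ℝ => Real.exp ((μ-κ)*q.2) * (φ₁ q.1 / ω₁ q.1) := by
    funext q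
    rw [mul_div_mul_comm, ← Real.exp_sub,
      show μ*q.2 - κ*q.2 = (μ-κ)*q.2 by ring]
  -- 1D derivatives
  have hF : HasDerivAt
      (fun x => ω₁ x * ((1 / (μ + κ)) * (deriv φ₁ x - (deriv ω₁ x / ω₁ x) * φ₁ x)))
      ((κ-μ) * (ω₁ p.1 * φ₁ p.1)) p.1 := by
    have hG : HasDerivAt
        (fun x => (1 / (μ + κ)) * (ω₁ x * deriv φ₁ x - deriv ω₁ x * φ₁ x))
        ((1 / (μ + κ)) * ((deriv ω₁ p.1 * deriv φ₁ p.1 + ω₁ p.1 * deriv (deriv φ₁) p.1)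
          - (deriv (deriv ω₁) p.1 * φ₁ p.1 + deriv ω₁ p.1 * deriv φ₁ p.1))) p.1 :=
      (((hA1.mul hB2).sub (hA2.mul hB1)).const_mul _)
    have heq : (fun x => (1 / (μ + κ)) * (ω₁ x * deriv φ₁ x - deriv ω₁ x * φ₁ x))
        =ᶠ[nhds p.1]
        (fun x => ω₁ x * ((1 / (μ + κ)) * (deriv φ₁ x - (deriv ω₁ x / ω₁ x) * φ₁ x))) := by
      filter_upwards [hI.mem_nhds hx] with z hz
      have := hω₁0 z hz
      field_simp
    have := hG.congr_of_eventuallyEq heq.symm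
    refine this.congr_deriv ?_
    rw [hAeq, hBeq]
    field_simp
    ring
  have hH : HasDerivAt (fun x => φ₁ x / ω₁ x)
      ((deriv φ₁ p.1 * ω₁ p.1 - φ₁ p.1 * deriv ω₁ p.1) / (ω₁ p.1)^2) p.1 :=
    hB1.div hA1 hA0
  beta_reduce
  rw [hωθ, hφω]
  constructor
  · rw [pd_sep₁ _ _ _ _ hF, pd_sep₂ _ _ _ _ hH]
    rw [show (κ+μ)*p.2 = κ*p.2 + μ*p.2 by ring, Real.exp_add,
      show (μ-κ)*p.2 = μ*p.2 - κ*p.2 by ring, Real.exp_sub]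
    have h1 := Real.exp_ne_zero (κ*p.2)
    field_simp
    ring
  · rw [pd_sep₂ _ _ _ _ hF, pd_sep₁ _ _ _ _ hH]
    rw [show (κ+μ)*p.2 = κ*p.2 + μ*p.2 by ring, Real.exp_add,
      show (μ-κ)*p.2 = μ*p.2 - κ*p.2 by ring, Real.exp_sub]
    have h1 := Real.exp_ne_zero (κ*p.2)
    field_simp
    ring
end

section
/- (Theorem 2: action of the Darboux transformation on the Dirichlet-to-Neumann map.) Let a < b be reals, u : ℝ → ℝ continuously differentiable on [a,b], and κ, μ ∈ ℝ with κ ≠ μ and κ ≠ −μ. Let ω₁ be three times continuously differentiable and nonvanishing on [a,b] with −ω₁'' + u·ω₁ = κ²·ω₁ on [a,b], and set ũ := u − 2·(ω₁''/ω₁ − (ω₁'/ω₁)²). Let M be the diagonal 2×2 real matrix with diagonal entries ω₁'(a)/ω₁(a) and ω₁'(b)/ω₁(b). Suppose Q is an invertible 2×2 real matrix such that every twice continuously differentiable solution ψ of −ψ'' + u·ψ = μ²·ψ on [a,b] satisfies (ψ'(a), ψ'(b))ᵀ = Q·(ψ(a), ψ(b))ᵀ, that for every v ∈ ℝ² there exists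 such a solution ψ with (ψ(a), ψ(b)) = v, and that the matrix 1 − M·Q⁻¹ is invertible. Suppose Q̃ is a 2×2 real matrix such that every twice continuously differentiable solution ψ̃ of −ψ̃'' + ũ·ψ̃ = μ²·ψ̃ on [a,b] satisfies (ψ̃'(a), ψ̃'(b))ᵀ = Q̃·(ψ̃(a), ψ̃(b))ᵀ, and that for every w ∈ ℝ² there exists such a solution ψ̃ with (ψ̃(a), ψ̃(b)) = w. Then Q̃ = −M + (κ² − μ²)·Q⁻¹·(1 − M·Q⁻¹)⁻¹. -/
open Set Filter Topology


lemma eqOn_Icc_of_eqOn_Ioo {a b : ℝ} (hab : a < b) {f g : ℝ → ℝ}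
    (hf : ContinuousOn f (Set.Icc a b)) (hg : ContinuousOn g (Set.Icc a b))
    (h : ∀ x ∈ Set.Ioo a b, f x = g x) : ∀ x ∈ Set.Icc a b, f x = g x := by
  intro x hx
  have hne : (𝓝[Set.Ioo a b] x).NeBot := by
    rw [← mem_closure_iff_nhdsWithin_neBot, closure_Ioo hab.ne]
    exact hx
  have h1 : Tendsto f (𝓝[Set.Ioo a b] x) (𝓝 (f x)) :=
    (hf x hx).mono Set.Ioo_subset_Icc_self
  have h2 : Tendsto g (𝓝[Set.Ioo a b] x) (𝓝 (g x)) :=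
    (hg x hx).mono Set.Ioo_subset_Icc_self
  have hev : f =ᶠ[𝓝[Set.Ioo a b] x] g :=
    eventually_nhdsWithin_of_forall h
  exact tendsto_nhds_unique ((tendsto_congr' hev).mp h1) h2

/-- Derivative of a quadratic Taylor polynomial. -/
lemma taylor2_hasDerivAt (c0 c1 c2 t x : ℝ) :
    HasDerivAt (fun y => c0 + c1 * (y - t) + c2 / 2 * (y - t) ^ 2) (c1 + c2 * (x - t)) x := by
  have h1 : HasDerivAt (fun y : ℝ => y - t) 1 x := (hasDerivAt_id x).sub_const t
  have h2 := ((h1.const_mul c1).const_add c0).add ((h1.pow 2).const_mul (c2 / 2))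
  refine h2.congr_deriv ?_
  simp
  ring

lemma taylor1_hasDerivAt (c1 c2 t x : ℝ) :
    HasDerivAt (fun y => c1 + c2 * (y - t)) c2 x := by
  have h1 : HasDerivAt (fun y : ℝ => y - t) 1 x := (hasDerivAt_id x).sub_const t
  have h2 := (h1.const_mul c2).const_add c1
  refine h2.congr_deriv ?_
  simp

/-- Gluing: if `h` has one-sided derivatives matching at the junctions, the piecewise
function has a genuine derivative. -/
lemma glue_hasDerivAt {a b : ℝ} (hab : a < b) {h p q : ℝ → ℝ}
    (hpa : p a = h a) (hqb : q b = h b)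
    (hp : ∀ y, HasDerivAt p (deriv p y) y) (hq : ∀ y, HasDerivAt q (deriv q y) y)
    (hint : ∀ y ∈ Set.Ioo a b, HasDerivAt h (deriv h y) y)
    (hra : HasDerivWithinAt h (deriv p a) (Set.Icc a b) a)
    (hlb : HasDerivWithinAt h (deriv q b) (Set.Icc a b) b) :
    ∀ x : ℝ, HasDerivAt (fun y => if y < a then p y else if y ≤ b then h y else q y)
      (if x < a then deriv p x else if x ≤ b
        then (if x = a then deriv p a else if x = b then deriv q b else deriv h x)
        else deriv q x) x := by
  intro x
  set g : ℝ → ℝ := fun y => if y < a then p y else if y ≤ b then h y else q y with hg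
  rcases lt_trichotomy x a with hxa | rfl | hax
  · -- x < a : g = p near x
    rw [if_pos hxa]
    have : g =ᶠ[𝓝 x] p := by
      filter_upwards [Iio_mem_nhds hxa] with y hy
      simp [hg, Set.mem_Iio.mp hy]
    exact (hp x).congr_of_eventuallyEq this
  · -- x = a
    rw [if_neg (lt_irrefl x), if_pos (le_of_lt hab), if_pos rfl]
    have hl : HasDerivWithinAt g (deriv p x) (Set.Iic x) x := by
      refine (hp x).hasDerivWithinAt.congr (fun y hy => ?_) ?_
      · rcases lt_or_eq_of_le (Set.mem_Iic.mp hy) with h' | rfl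
        · simp [hg, h']
        · simp [hg, lt_irrefl, le_of_lt hab, hpa]
      · simp [hg, lt_irrefl, le_of_lt hab, hpa]
    have hr : HasDerivWithinAt g (deriv p x) (Set.Ici x) x := by
      have h1 : HasDerivWithinAt h (deriv p x) (Set.Ici x) x :=
        hra.mono_of_mem_nhdsWithin (Icc_mem_nhdsGE_of_mem ⟨le_refl x, hab⟩)
      refine h1.congr_of_eventuallyEq ?_ ?_
      · filter_upwards [Icc_mem_nhdsGE_of_mem (⟨le_refl x, hab⟩ : x ∈ Set.Ico x b)]
          with y hy
        simp [hg, not_lt.mpr hy.1, hy.2]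
      · simp [hg, lt_irrefl, le_of_lt hab]
    simpa [Set.Iic_union_Ici, hasDerivWithinAt_univ] using hl.union hr
  rcases lt_trichotomy x b with hxb | rfl | hbx
  · -- a < x < b
    rw [if_neg (not_lt.mpr (le_of_lt hax)), if_pos (le_of_lt hxb),
      if_neg (ne_of_gt hax), if_neg (ne_of_lt hxb)]
    have : g =ᶠ[𝓝 x] h := by
      filter_upwards [Ioo_mem_nhds hax hxb] with y hy
      simp [hg, not_lt.mpr (le_of_lt hy.1), le_of_lt hy.2]
    exact (hint x ⟨hax, hxb⟩).congr_of_eventuallyEq this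
  · -- x = b
    rw [if_neg (not_lt.mpr (le_of_lt hax)), if_pos (le_refl x),
      if_neg (ne_of_gt hax), if_pos rfl]
    have hl : HasDerivWithinAt g (deriv q x) (Set.Iic x) x := by
      have h1 : HasDerivWithinAt h (deriv q x) (Set.Iic x) x :=
        hlb.mono_of_mem_nhdsWithin (Icc_mem_nhdsLE_of_mem ⟨hax, le_refl x⟩)
      refine h1.congr_of_eventuallyEq ?_ ?_
      · filter_upwards [Icc_mem_nhdsLE_of_mem (⟨hax, le_refl x⟩ : x ∈ Set.Ioc a x),
          self_mem_nhdsWithin] with y hy hy'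
        simp [hg, not_lt.mpr hy.1, hy.2]
      · simp [hg, not_lt.mpr (le_of_lt hax), le_refl]
    have hr : HasDerivWithinAt g (deriv q x) (Set.Ici x) x := by
      refine (hq x).hasDerivWithinAt.congr (fun y hy => ?_) ?_
      · rcases lt_or_eq_of_le (Set.mem_Ici.mp hy) with h' | rfl
        · simp [hg, not_lt.mpr (le_of_lt (hab.trans h')), not_le.mpr h']
        · simp [hg, not_lt.mpr (le_of_lt hax), le_refl, hqb]
      · simp [hg, not_lt.mpr (le_of_lt hax), le_refl, hqb]
    simpa [Set.Iic_union_Ici, hasDerivWithinAt_univ] using hl.union hr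
  · -- b < x
    rw [if_neg (not_lt.mpr (le_of_lt hax)), if_neg (not_le.mpr hbx)]
    have : g =ᶠ[𝓝 x] q := by
      filter_upwards [Ioi_mem_nhds hbx] with y hy
      simp [hg, not_lt.mpr (le_of_lt ((hab.trans_le (le_of_lt hy)))), not_le.mpr (Set.mem_Ioi.mp hy),
        not_lt.mpr (le_of_lt (hab.trans hy))]
    exact (hq x).congr_of_eventuallyEq this

section
variable {a b : ℝ}

/-- Whitney-type second order extension of a `C²` function on `[a,b]`:
a function agreeing with `f` on `[a,b]` whose *global* first and second derivatives
on `[a,b]` are the within-derivatives of `f`. -/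
lemma exists_global_ext (hab : a < b) {f : ℝ → ℝ}
    (hf : ContDiffOn ℝ 2 f (Set.Icc a b)) :
    ∃ g : ℝ → ℝ, Set.EqOn g f (Set.Icc a b) ∧ ContDiffOn ℝ 2 g (Set.Icc a b) ∧
      (∀ x ∈ Set.Icc a b, deriv g x = derivWithin f (Set.Icc a b) x) ∧
      (∀ x ∈ Set.Icc a b,
        deriv (deriv g) x = derivWithin (derivWithin f (Set.Icc a b)) (Set.Icc a b) x) := by
  set s := Set.Icc a b with hs
  set d1 : ℝ → ℝ := derivWithin f s with hd1
  set d2 : ℝ → ℝ := derivWithin d1 s with hd2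
  have hd : UniqueDiffOn ℝ s := uniqueDiffOn_Icc hab
  have hf1 : ContDiffOn ℝ 1 d1 s := hf.derivWithin hd (by norm_num)
  have hfd : DifferentiableOn ℝ f s := hf.differentiableOn (by norm_num)
  have hd1d : DifferentiableOn ℝ d1 s := hf1.differentiableOn (by norm_num)
  have hmema : a ∈ s := Set.left_mem_Icc.mpr hab.le
  have hmemb : b ∈ s := Set.right_mem_Icc.mpr hab.le
  -- the Taylor extensions
  set p : ℝ → ℝ := fun y => f a + d1 a * (y - a) + d2 a / 2 * (y - a) ^ 2 with hp
  set q : ℝ → ℝ := fun y => f b + d1 b * (y - b) + d2 b / 2 * (y - b) ^ 2 with hq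
  have hpderiv : ∀ y, deriv p y = d1 a + d2 a * (y - a) :=
    fun y => (taylor2_hasDerivAt (f a) (d1 a) (d2 a) a y).deriv
  have hqderiv : ∀ y, deriv q y = d1 b + d2 b * (y - b) :=
    fun y => (taylor2_hasDerivAt (f b) (d1 b) (d2 b) b y).deriv
  set g : ℝ → ℝ := fun y => if y < a then p y else if y ≤ b then f y else q y with hg
  have hgf : Set.EqOn g f s := by
    intro x hx
    simp [hg, not_lt.mpr hx.1, hx.2]
  -- facts about f at interior points
  have hfint : ∀ y ∈ Set.Ioo a b, HasDerivAt f (deriv f y) y := by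
    intro y hy
    exact ((hfd y (Set.Ioo_subset_Icc_self hy)).differentiableAt
      (Icc_mem_nhds hy.1 hy.2)).hasDerivAt
  have hderiv_int : ∀ y ∈ Set.Ioo a b, deriv f y = d1 y := by
    intro y hy
    exact (derivWithin_of_mem_nhds (Icc_mem_nhds hy.1 hy.2)).symm
  -- first gluing
  have h1 := glue_hasDerivAt hab (p := p) (q := q) (h := f)
    (by simp [hp]) (by simp [hq])
    (fun y => by rw [hpderiv]; exact taylor2_hasDerivAt _ _ _ _ _)
    (fun y => by rw [hqderiv]; exact taylor2_hasDerivAt _ _ _ _ _)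
    hfint
    (by
      have := (hfd a hmema).hasDerivWithinAt
      rw [hpderiv]
      refine this.congr_deriv ?_
      simp [hd1])
    (by
      have := (hfd b hmemb).hasDerivWithinAt
      rw [hqderiv]
      refine this.congr_deriv ?_
      simp [hd1])
  -- compute deriv g globally
  set D1 : ℝ → ℝ := fun y => if y < a then d1 a + d2 a * (y - a) else if y ≤ b then d1 y
      else d1 b + d2 b * (y - b) with hD1
  have hgderiv : deriv g = D1 := by
    funext x
    have := (h1 x).deriv
    rw [this, hD1]
    rcases lt_or_ge x a with hxa | hax
    · simp [hxa, hpderiv]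
    rcases le_or_gt x b with hxb | hbx
    · simp only [if_neg (not_lt.mpr hax), if_pos hxb]
      rcases eq_or_lt_of_le hax with rfl | hax'
      · simp [hpderiv]
      rcases eq_or_lt_of_le hxb with rfl | hxb'
      · simp [hqderiv, ne_of_gt hax']
      · simp [if_neg (ne_of_gt hax'), if_neg (ne_of_lt hxb'), hderiv_int x ⟨hax', hxb'⟩]
    · simp [if_neg (not_lt.mpr hax), if_neg (not_le.mpr hbx), hqderiv]
  -- facts about d1 at interior points
  have hd1int : ∀ y ∈ Set.Ioo a b, HasDerivAt d1 (deriv d1 y) y := fun y hy =>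
    ((hd1d y (Set.Ioo_subset_Icc_self hy)).differentiableAt
      (Icc_mem_nhds hy.1 hy.2)).hasDerivAt
  have hd1deriv_int : ∀ y ∈ Set.Ioo a b, deriv d1 y = d2 y := fun y hy =>
    (derivWithin_of_mem_nhds (Icc_mem_nhds hy.1 hy.2)).symm
  -- second gluing: D1 is differentiable everywhere
  have h2 := glue_hasDerivAt hab
    (p := fun y => d1 a + d2 a * (y - a)) (q := fun y => d1 b + d2 b * (y - b)) (h := d1)
    (by simp) (by simp)
    (fun y => by rw [(taylor1_hasDerivAt (d1 a) (d2 a) a y).deriv]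
                 exact taylor1_hasDerivAt _ _ _ _)
    (fun y => by rw [(taylor1_hasDerivAt (d1 b) (d2 b) b y).deriv]
                 exact taylor1_hasDerivAt _ _ _ _)
    hd1int
    (by
      have := (hd1d a hmema).hasDerivWithinAt
      rw [(taylor1_hasDerivAt (d1 a) (d2 a) a a).deriv]
      exact this)
    (by
      have := (hd1d b hmemb).hasDerivWithinAt
      rw [(taylor1_hasDerivAt (d1 b) (d2 b) b b).deriv]
      exact this)
  refine ⟨g, hgf, hf.congr hgf, ?_, ?_⟩
  · intro x hx
    rw [hgderiv, hD1]
    simp [not_lt.mpr hx.1, hx.2]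
  · intro x hx
    rw [hgderiv]
    have hval := (h2 x).deriv
    -- the if-expression in h2's conclusion matches D1's definition shape
    rw [hval]
    rcases eq_or_lt_of_le hx.1 with rfl | hax'
    · rw [if_neg (lt_irrefl a), if_pos (le_of_lt hab), if_pos rfl,
        (taylor1_hasDerivAt (d1 a) (d2 a) a a).deriv]
    rcases eq_or_lt_of_le hx.2 with rfl | hxb'
    · rw [if_neg (not_lt.mpr hx.1), if_pos (le_refl x), if_neg (ne_of_gt hax'), if_pos rfl,
        (taylor1_hasDerivAt (d1 x) (d2 x) x x).deriv]
    · rw [if_neg (not_lt.mpr hx.1), if_pos hx.2, if_neg (ne_of_gt hax'),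
        if_neg (ne_of_lt hxb'), hd1deriv_int x ⟨hax', hxb'⟩]
end

-- interior identifications
lemma deriv_eq_within₁ {a b x : ℝ} (hx : x ∈ Set.Ioo a b) (f : ℝ → ℝ) :
    deriv f x = derivWithin f (Set.Icc a b) x :=
  (derivWithin_of_mem_nhds (Icc_mem_nhds hx.1 hx.2)).symm

lemma deriv_eq_within₂ {a b x : ℝ} (hx : x ∈ Set.Ioo a b) (f : ℝ → ℝ) :
    deriv (deriv f) x
      = derivWithin (derivWithin f (Set.Icc a b)) (Set.Icc a b) x := by
  have hev : deriv f =ᶠ[𝓝 x] derivWithin f (Set.Icc a b) := by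
    filter_upwards [Ioo_mem_nhds hx.1 hx.2] with y hy
    exact deriv_eq_within₁ hy f
  rw [hev.deriv_eq]
  exact deriv_eq_within₁ hx _

lemma step0_left {a b : ℝ} (hab : a < b) {u ω₁ : ℝ → ℝ} {κ μ : ℝ}
    (hκμ2 : κ ^ 2 - μ ^ 2 ≠ 0)
    (hu : ContDiffOn ℝ 1 u (Set.Icc a b))
    (hω₁ : ContDiffOn ℝ 3 ω₁ (Set.Icc a b))
    (hω₁0 : ∀ x ∈ Set.Icc a b, ω₁ x ≠ 0)
    (hω₁eq : ∀ x ∈ Set.Icc a b,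
      -(deriv (deriv ω₁) x) + u x * ω₁ x = κ ^ 2 * ω₁ x)
    (hQtsurj : ∀ w : Fin 2 → ℝ, ∃ ψt : ℝ → ℝ,
      ContDiffOn ℝ 2 ψt (Set.Icc a b) ∧
      (∀ x ∈ Set.Icc a b,
        -(deriv (deriv ψt) x)
          + (u x - 2 * (deriv (deriv ω₁) x / ω₁ x - (deriv ω₁ x / ω₁ x) ^ 2)) * ψt x
          = μ ^ 2 * ψt x) ∧
      ![ψt a, ψt b] = w) :
    deriv ω₁ a = derivWithin ω₁ (Set.Icc a b) a := by
  set s : Set ℝ := Set.Icc a b with hsdef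
  have hd : UniqueDiffOn ℝ s := uniqueDiffOn_Icc hab
  have ha : a ∈ s := Set.left_mem_Icc.mpr hab.le
  set w1 : ℝ → ℝ := derivWithin ω₁ s with hw1def
  set w2 : ℝ → ℝ := derivWithin w1 s with hw2def
  have hw1 : ContDiffOn ℝ 2 w1 s := hω₁.derivWithin hd (by norm_num)
  have hw2 : ContDiffOn ℝ 1 w2 s := hw1.derivWithin hd (by norm_num)
  have hω₁c : ContinuousOn ω₁ s := hω₁.continuousOn
  have hucont : ContinuousOn u s := hu.continuousOn
  -- F1 : w2 = (u - κ²)·ω₁ on s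
  have F1 : ∀ x ∈ s, w2 x = (u x - κ ^ 2) * ω₁ x := by
    refine eqOn_Icc_of_eqOn_Ioo hab (hw2.continuousOn) ((hucont.sub continuousOn_const).mul hω₁c) ?_
    intro x hx
    have h1 := hω₁eq x (Set.Ioo_subset_Icc_self hx)
    have h2 := deriv_eq_within₂ hx ω₁
    rw [h2] at h1
    linarith [h1]
  by_cases hdiff : DifferentiableAt ℝ ω₁ a
  · exact (hdiff.hasDerivAt.hasDerivWithinAt.derivWithin (hd a ha)).symm
  have h0 : deriv ω₁ a = 0 := deriv_zero_of_not_differentiableAt hdiff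
  by_cases hL : w1 a = 0
  · rw [h0, hL]
  exfalso
  have hneBot : (𝓝[Set.Ioo a b] a).NeBot := by
    rw [← mem_closure_iff_nhdsWithin_neBot, closure_Ioo hab.ne]
    exact ha
  have htend : Tendsto (deriv ω₁) (𝓝[Set.Ioo a b] a) (𝓝 (w1 a)) := by
    have h1 : Tendsto w1 (𝓝[Set.Ioo a b] a) (𝓝 (w1 a)) :=
      ((hw1.continuousOn a ha).mono Set.Ioo_subset_Icc_self)
    refine (tendsto_congr' ?_).mpr h1
    exact eventually_nhdsWithin_of_forall fun y hy => deriv_eq_within₁ hy ω₁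
  have hdd : ¬ DifferentiableAt ℝ (deriv ω₁) a := by
    intro hc
    have h1 : Tendsto (deriv ω₁) (𝓝[Set.Ioo a b] a) (𝓝 (deriv ω₁ a)) :=
      (hc.continuousAt.continuousWithinAt)
    have := tendsto_nhds_unique h1 htend
    rw [h0] at this
    exact hL this.symm
  have h00 : deriv (deriv ω₁) a = 0 := deriv_zero_of_not_differentiableAt hdd
  have hua : u a = κ ^ 2 := by
    have := hω₁eq a ha
    rw [h00] at this
    have hne := hω₁0 a ha
    exact mul_right_cancel₀ hne (by linarith)
  -- get a transformed solution with ψt a = 1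
  obtain ⟨ψt, hψt2, hψteq, hψtbd⟩ := hQtsurj ![1, 0]
  have hψta : ψt a = 1 := by
    have := congrFun hψtbd 0
    simpa using this
  have heqa := hψteq a ha
  rw [h00, h0, hψta] at heqa
  have hval : deriv (deriv ψt) a = κ ^ 2 - μ ^ 2 := by
    rw [hua] at heqa
    simp at heqa
    linarith
  have hdd2 : DifferentiableAt ℝ (deriv ψt) a := by
    by_contra hc
    rw [deriv_zero_of_not_differentiableAt hc] at hval
    exact hκμ2 hval.symm
  -- within derivatives of ψt
  set p1 : ℝ → ℝ := derivWithin ψt s with hp1def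
  have hp1 : ContDiffOn ℝ 1 p1 s := hψt2.derivWithin hd (by norm_num)
  -- continuous transformed potential
  set Ut : ℝ → ℝ := fun x => u x - 2 * (w2 x / ω₁ x - (w1 x / ω₁ x) ^ 2) with hUtdef
  have hUtc : ContinuousOn Ut s := by
    refine hucont.sub (continuousOn_const.mul (((hw2.continuousOn.div hω₁c hω₁0)).sub
      ((hw1.continuousOn.div hω₁c hω₁0).pow 2)))
  -- interior ODE with continuous potential
  have hODE : ∀ y ∈ Set.Ioo a b, deriv (deriv ψt) y = (Ut y - μ ^ 2) * ψt y := by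
    intro y hy
    have hys : y ∈ s := Set.Ioo_subset_Icc_self hy
    have h1 := hψteq y hys
    rw [deriv_eq_within₁ hy ω₁, deriv_eq_within₂ hy ω₁] at h1
    rw [hUtdef]
    simp only [← hw1def, ← hw2def] at h1 ⊢
    linarith
  -- two candidate right-derivatives of (deriv ψt) at a
  have hA : HasDerivWithinAt (deriv ψt) (κ ^ 2 - μ ^ 2) (Set.Ici a) a := by
    have := hdd2.hasDerivAt
    rw [hval] at this
    exact this.hasDerivWithinAt
  have hdiffIoo : DifferentiableOn ℝ (deriv ψt) (Set.Ioo a b) := by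
    intro y hy
    have hys : y ∈ s := Set.Ioo_subset_Icc_self hy
    have h1 : DifferentiableAt ℝ p1 y :=
      (hp1.differentiableOn one_ne_zero y hys).differentiableAt (Icc_mem_nhds hy.1 hy.2)
    have hev : deriv ψt =ᶠ[𝓝 y] p1 := by
      filter_upwards [Ioo_mem_nhds hy.1 hy.2] with z hz
      exact deriv_eq_within₁ hz ψt
    exact (h1.congr_of_eventuallyEq hev).differentiableWithinAt
  have hB : HasDerivWithinAt (deriv ψt) ((Ut a - μ ^ 2) * ψt a) (Set.Ici a) a := by
    refine hasDerivWithinAt_Ici_of_tendsto_deriv hdiffIoo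
      (hdd2.continuousAt.continuousWithinAt) (Ioo_mem_nhdsGT_of_mem ⟨le_refl a, hab⟩) ?_
    have hle : 𝓝[>] a ≤ 𝓝[Set.Ioo a b] a :=
      nhdsWithin_le_of_mem (Ioo_mem_nhdsGT_of_mem ⟨le_refl a, hab⟩)
    have h1 : Tendsto (fun x => (Ut x - μ ^ 2) * ψt x) (𝓝[Set.Ioo a b] a)
        (𝓝 ((Ut a - μ ^ 2) * ψt a)) :=
      (((hUtc.sub continuousOn_const).mul hψt2.continuousOn) a ha).mono Set.Ioo_subset_Icc_self
    have h2 : Tendsto (fun x => deriv (deriv ψt) x) (𝓝[Set.Ioo a b] a)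
        (𝓝 ((Ut a - μ ^ 2) * ψt a)) := by
      refine (tendsto_congr' ?_).mpr h1
      exact eventually_nhdsWithin_of_forall fun y hy => (hODE y hy)
    exact h2.mono_left hle
  have huniq : UniqueDiffWithinAt ℝ (Set.Ici a) a := uniqueDiffOn_Ici a a Set.self_mem_Ici
  have heq2 : κ ^ 2 - μ ^ 2 = (Ut a - μ ^ 2) * ψt a := by
    rw [← hA.derivWithin huniq, ← hB.derivWithin huniq]
  -- but Ut a = κ² + 2 (w1 a / ω₁ a)²
  have hUta : Ut a = κ ^ 2 + 2 * (w1 a / ω₁ a) ^ 2 := by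
    rw [hUtdef]
    simp only
    rw [F1 a ha, hua]
    have := hω₁0 a ha
    field_simp
    ring
  rw [hψta, hUta, mul_one] at heq2
  have : (w1 a / ω₁ a) ^ 2 = 0 := by linarith
  have := pow_eq_zero_iff (n := 2) (by norm_num) |>.mp this
  exact hL (by
    have hne := hω₁0 a ha
    field_simp at this
    simpa using this)

lemma step0_right {a b : ℝ} (hab : a < b) {u ω₁ : ℝ → ℝ} {κ μ : ℝ}
    (hκμ2 : κ ^ 2 - μ ^ 2 ≠ 0)
    (hu : ContDiffOn ℝ 1 u (Set.Icc a b))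
    (hω₁ : ContDiffOn ℝ 3 ω₁ (Set.Icc a b))
    (hω₁0 : ∀ x ∈ Set.Icc a b, ω₁ x ≠ 0)
    (hω₁eq : ∀ x ∈ Set.Icc a b,
      -(deriv (deriv ω₁) x) + u x * ω₁ x = κ ^ 2 * ω₁ x)
    (hQtsurj : ∀ w : Fin 2 → ℝ, ∃ ψt : ℝ → ℝ,
      ContDiffOn ℝ 2 ψt (Set.Icc a b) ∧
      (∀ x ∈ Set.Icc a b,
        -(deriv (deriv ψt) x)
          + (u x - 2 * (deriv (deriv ω₁) x / ω₁ x - (deriv ω₁ x / ω₁ x) ^ 2)) * ψt x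
          = μ ^ 2 * ψt x) ∧
      ![ψt a, ψt b] = w) :
    deriv ω₁ b = derivWithin ω₁ (Set.Icc a b) b := by
  set s : Set ℝ := Set.Icc a b with hsdef
  have hd : UniqueDiffOn ℝ s := uniqueDiffOn_Icc hab
  have ha : b ∈ s := Set.right_mem_Icc.mpr hab.le
  set w1 : ℝ → ℝ := derivWithin ω₁ s with hw1def
  set w2 : ℝ → ℝ := derivWithin w1 s with hw2def
  have hw1 : ContDiffOn ℝ 2 w1 s := hω₁.derivWithin hd (by norm_num)
  have hw2 : ContDiffOn ℝ 1 w2 s := hw1.derivWithin hd (by norm_num)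
  have hω₁c : ContinuousOn ω₁ s := hω₁.continuousOn
  have hucont : ContinuousOn u s := hu.continuousOn
  -- F1 : w2 = (u - κ²)·ω₁ on s
  have F1 : ∀ x ∈ s, w2 x = (u x - κ ^ 2) * ω₁ x := by
    refine eqOn_Icc_of_eqOn_Ioo hab (hw2.continuousOn) ((hucont.sub continuousOn_const).mul hω₁c) ?_
    intro x hx
    have h1 := hω₁eq x (Set.Ioo_subset_Icc_self hx)
    have h2 := deriv_eq_within₂ hx ω₁
    rw [h2] at h1
    linarith [h1]
  by_cases hdiff : DifferentiableAt ℝ ω₁ b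
  · exact (hdiff.hasDerivAt.hasDerivWithinAt.derivWithin (hd b ha)).symm
  have h0 : deriv ω₁ b = 0 := deriv_zero_of_not_differentiableAt hdiff
  by_cases hL : w1 b = 0
  · rw [h0, hL]
  exfalso
  have hneBot : (𝓝[Set.Ioo a b] b).NeBot := by
    rw [← mem_closure_iff_nhdsWithin_neBot, closure_Ioo hab.ne]
    exact ha
  have htend : Tendsto (deriv ω₁) (𝓝[Set.Ioo a b] b) (𝓝 (w1 b)) := by
    have h1 : Tendsto w1 (𝓝[Set.Ioo a b] b) (𝓝 (w1 b)) :=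
      ((hw1.continuousOn b ha).mono Set.Ioo_subset_Icc_self)
    refine (tendsto_congr' ?_).mpr h1
    exact eventually_nhdsWithin_of_forall fun y hy => deriv_eq_within₁ hy ω₁
  have hdd : ¬ DifferentiableAt ℝ (deriv ω₁) b := by
    intro hc
    have h1 : Tendsto (deriv ω₁) (𝓝[Set.Ioo a b] b) (𝓝 (deriv ω₁ b)) :=
      (hc.continuousAt.continuousWithinAt)
    have := tendsto_nhds_unique h1 htend
    rw [h0] at this
    exact hL this.symm
  have h00 : deriv (deriv ω₁) b = 0 := deriv_zero_of_not_differentiableAt hdd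
  have hua : u b = κ ^ 2 := by
    have := hω₁eq b ha
    rw [h00] at this
    have hne := hω₁0 b ha
    exact mul_right_cancel₀ hne (by linarith)
  -- get a transformed solution with ψt a = 1
  obtain ⟨ψt, hψt2, hψteq, hψtbd⟩ := hQtsurj ![0, 1]
  have hψtb : ψt b = 1 := by
    have := congrFun hψtbd 1
    simpa using this
  have heqa := hψteq b ha
  rw [h00, h0, hψtb] at heqa
  have hval : deriv (deriv ψt) b = κ ^ 2 - μ ^ 2 := by
    rw [hua] at heqa
    simp at heqa
    linarith
  have hdd2 : DifferentiableAt ℝ (deriv ψt) b := by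
    by_contra hc
    rw [deriv_zero_of_not_differentiableAt hc] at hval
    exact hκμ2 hval.symm
  -- within derivatives of ψt
  set p1 : ℝ → ℝ := derivWithin ψt s with hp1def
  have hp1 : ContDiffOn ℝ 1 p1 s := hψt2.derivWithin hd (by norm_num)
  -- continuous transformed potential
  set Ut : ℝ → ℝ := fun x => u x - 2 * (w2 x / ω₁ x - (w1 x / ω₁ x) ^ 2) with hUtdef
  have hUtc : ContinuousOn Ut s := by
    refine hucont.sub (continuousOn_const.mul (((hw2.continuousOn.div hω₁c hω₁0)).sub
      ((hw1.continuousOn.div hω₁c hω₁0).pow 2)))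
  -- interior ODE with continuous potential
  have hODE : ∀ y ∈ Set.Ioo a b, deriv (deriv ψt) y = (Ut y - μ ^ 2) * ψt y := by
    intro y hy
    have hys : y ∈ s := Set.Ioo_subset_Icc_self hy
    have h1 := hψteq y hys
    rw [deriv_eq_within₁ hy ω₁, deriv_eq_within₂ hy ω₁] at h1
    rw [hUtdef]
    simp only [← hw1def, ← hw2def] at h1 ⊢
    linarith
  -- two candidate right-derivatives of (deriv ψt) at a
  have hA : HasDerivWithinAt (deriv ψt) (κ ^ 2 - μ ^ 2) (Set.Iic b) b := by
    have := hdd2.hasDerivAt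
    rw [hval] at this
    exact this.hasDerivWithinAt
  have hdiffIoo : DifferentiableOn ℝ (deriv ψt) (Set.Ioo a b) := by
    intro y hy
    have hys : y ∈ s := Set.Ioo_subset_Icc_self hy
    have h1 : DifferentiableAt ℝ p1 y :=
      (hp1.differentiableOn one_ne_zero y hys).differentiableAt (Icc_mem_nhds hy.1 hy.2)
    have hev : deriv ψt =ᶠ[𝓝 y] p1 := by
      filter_upwards [Ioo_mem_nhds hy.1 hy.2] with z hz
      exact deriv_eq_within₁ hz ψt
    exact (h1.congr_of_eventuallyEq hev).differentiableWithinAt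
  have hB : HasDerivWithinAt (deriv ψt) ((Ut b - μ ^ 2) * ψt b) (Set.Iic b) b := by
    refine hasDerivWithinAt_Iic_of_tendsto_deriv hdiffIoo
      (hdd2.continuousAt.continuousWithinAt) (Ioo_mem_nhdsLT hab) ?_
    have hle : 𝓝[<] b ≤ 𝓝[Set.Ioo a b] b :=
      nhdsWithin_le_of_mem (Ioo_mem_nhdsLT hab)
    have h1 : Tendsto (fun x => (Ut x - μ ^ 2) * ψt x) (𝓝[Set.Ioo a b] b)
        (𝓝 ((Ut b - μ ^ 2) * ψt b)) :=
      (((hUtc.sub continuousOn_const).mul hψt2.continuousOn) b ha).mono Set.Ioo_subset_Icc_self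
    have h2 : Tendsto (fun x => deriv (deriv ψt) x) (𝓝[Set.Ioo a b] b)
        (𝓝 ((Ut b - μ ^ 2) * ψt b)) := by
      refine (tendsto_congr' ?_).mpr h1
      exact eventually_nhdsWithin_of_forall fun y hy => (hODE y hy)
    exact h2.mono_left hle
  have huniq : UniqueDiffWithinAt ℝ (Set.Iic b) b := uniqueDiffOn_Iic b b Set.self_mem_Iic
  have heq2 : κ ^ 2 - μ ^ 2 = (Ut b - μ ^ 2) * ψt b := by
    rw [← hA.derivWithin huniq, ← hB.derivWithin huniq]
  -- but Ut a = κ² + 2 (w1 a / ω₁ a)²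
  have hUta : Ut b = κ ^ 2 + 2 * (w1 b / ω₁ b) ^ 2 := by
    rw [hUtdef]
    simp only
    rw [F1 b ha, hua]
    have := hω₁0 b ha
    field_simp
    ring
  rw [hψtb, hUta, mul_one] at heq2
  have : (w1 b / ω₁ b) ^ 2 = 0 := by linarith
  have := pow_eq_zero_iff (n := 2) (by norm_num) |>.mp this
  exact hL (by
    have hne := hω₁0 b ha
    field_simp at this
    simpa using this)

/-- Theorem 2: the Darboux transformation acts on the
Dirichlet-to-Neumann matrix by
`Q̃ = -M + (κ² - μ²) Q⁻¹ (1 - M Q⁻¹)⁻¹`, where `M = diag(ω₁'(a)/ω₁(a), ω₁'(b)/ω₁(b))`. -/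
theorem darboux_action_on_DN_matrix
    (a b : ℝ) (hab : a < b)
    (u ω₁ : ℝ → ℝ) (κ μ : ℝ)
    (hκμ : κ ≠ μ) (hκμ' : κ ≠ -μ)
    (hu : ContDiffOn ℝ 1 u (Set.Icc a b))
    (hω₁ : ContDiffOn ℝ 3 ω₁ (Set.Icc a b))
    (hω₁0 : ∀ x ∈ Set.Icc a b, ω₁ x ≠ 0)
    (hω₁eq : ∀ x ∈ Set.Icc a b,
      -(deriv (deriv ω₁) x) + u x * ω₁ x = κ ^ 2 * ω₁ x)
    (M Q Qt : Matrix (Fin 2) (Fin 2) ℝ)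
    (hM : M = Matrix.diagonal ![deriv ω₁ a / ω₁ a, deriv ω₁ b / ω₁ b])
    (hQunit : IsUnit Q)
    (hQDN : ∀ ψ : ℝ → ℝ, ContDiffOn ℝ 2 ψ (Set.Icc a b) →
      (∀ x ∈ Set.Icc a b,
        -(deriv (deriv ψ) x) + u x * ψ x = μ ^ 2 * ψ x) →
      ![deriv ψ a, deriv ψ b] = Q.mulVec ![ψ a, ψ b])
    (hQsurj : ∀ v : Fin 2 → ℝ, ∃ ψ : ℝ → ℝ,
      ContDiffOn ℝ 2 ψ (Set.Icc a b) ∧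
      (∀ x ∈ Set.Icc a b,
        -(deriv (deriv ψ) x) + u x * ψ x = μ ^ 2 * ψ x) ∧
      ![ψ a, ψ b] = v)
    (hMQ : IsUnit (1 - M * Q⁻¹))
    (hQtDN : ∀ ψt : ℝ → ℝ, ContDiffOn ℝ 2 ψt (Set.Icc a b) →
      (∀ x ∈ Set.Icc a b,
        -(deriv (deriv ψt) x)
          + (u x - 2 * (deriv (deriv ω₁) x / ω₁ x - (deriv ω₁ x / ω₁ x) ^ 2)) * ψt x
          = μ ^ 2 * ψt x) →
      ![deriv ψt a, deriv ψt b] = Qt.mulVec ![ψt a, ψt b])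
    (hQtsurj : ∀ w : Fin 2 → ℝ, ∃ ψt : ℝ → ℝ,
      ContDiffOn ℝ 2 ψt (Set.Icc a b) ∧
      (∀ x ∈ Set.Icc a b,
        -(deriv (deriv ψt) x)
          + (u x - 2 * (deriv (deriv ω₁) x / ω₁ x - (deriv ω₁ x / ω₁ x) ^ 2)) * ψt x
          = μ ^ 2 * ψt x) ∧
      ![ψt a, ψt b] = w) :
    Qt = -M + (κ ^ 2 - μ ^ 2) • (Q⁻¹ * (1 - M * Q⁻¹)⁻¹) := by
  have hd : UniqueDiffOn ℝ (Set.Icc a b) := uniqueDiffOn_Icc hab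
  have ha : a ∈ Set.Icc a b := Set.left_mem_Icc.mpr hab.le
  have hb : b ∈ Set.Icc a b := Set.right_mem_Icc.mpr hab.le
  have hκμ2 : κ ^ 2 - μ ^ 2 ≠ 0 := by
    intro h
    have h2 : (κ - μ) * (κ + μ) = 0 := by rw [← h]; ring
    rcases mul_eq_zero.mp h2 with h3 | h3
    · exact hκμ (sub_eq_zero.mp h3)
    · exact hκμ' (eq_neg_of_add_eq_zero_left h3)
  have hS0a : deriv ω₁ a = derivWithin ω₁ (Set.Icc a b) a :=
    step0_left hab hκμ2 hu hω₁ hω₁0 hω₁eq hQtsurj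
  have hS0b : deriv ω₁ b = derivWithin ω₁ (Set.Icc a b) b :=
    step0_right hab hκμ2 hu hω₁ hω₁0 hω₁eq hQtsurj
  have hω₁c : ContinuousOn ω₁ (Set.Icc a b) := hω₁.continuousOn
  have hucont : ContinuousOn u (Set.Icc a b) := hu.continuousOn
  have hw1 : ContDiffOn ℝ 2 (derivWithin ω₁ (Set.Icc a b)) (Set.Icc a b) :=
    hω₁.derivWithin hd (by norm_num)
  have hw2 : ContDiffOn ℝ 1
      (derivWithin (derivWithin ω₁ (Set.Icc a b)) (Set.Icc a b)) (Set.Icc a b) :=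
    hw1.derivWithin hd (by norm_num)
  -- F1 : second within-derivative of ω₁
  have F1 : ∀ x ∈ Set.Icc a b,
      derivWithin (derivWithin ω₁ (Set.Icc a b)) (Set.Icc a b) x = (u x - κ ^ 2) * ω₁ x := by
    refine eqOn_Icc_of_eqOn_Ioo hab hw2.continuousOn
      ((hucont.sub continuousOn_const).mul hω₁c) ?_
    intro x hx
    have h1 := hω₁eq x (Set.Ioo_subset_Icc_self hx)
    rw [deriv_eq_within₂ hx ω₁] at h1
    linarith
  -- F2 / F3 : global derivatives of ω₁ on [a,b] agree with within-derivatives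
  have F2 : ∀ x ∈ Set.Icc a b, deriv ω₁ x = derivWithin ω₁ (Set.Icc a b) x := by
    intro x hx
    by_cases hxa : x = a
    · subst hxa; exact hS0a
    by_cases hxb : x = b
    · subst hxb; exact hS0b
    exact deriv_eq_within₁ ⟨lt_of_le_of_ne hx.1 (Ne.symm hxa), lt_of_le_of_ne hx.2 hxb⟩ ω₁
  have F3 : ∀ x ∈ Set.Icc a b,
      deriv (deriv ω₁) x = derivWithin (derivWithin ω₁ (Set.Icc a b)) (Set.Icc a b) x := by
    intro x hx
    have h1 := hω₁eq x hx
    rw [F1 x hx]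
    linarith
  -- F4 : the transformed potential agrees with its continuous version
  have F4 : ∀ x ∈ Set.Icc a b,
      u x - 2 * (deriv (deriv ω₁) x / ω₁ x - (deriv ω₁ x / ω₁ x) ^ 2)
        = u x - 2 * (derivWithin (derivWithin ω₁ (Set.Icc a b)) (Set.Icc a b) x / ω₁ x
          - (derivWithin ω₁ (Set.Icc a b) x / ω₁ x) ^ 2) := by
    intro x hx
    rw [F2 x hx, F3 x hx]
  -- continuity and smoothness of the continuous transformed potential
  have hUt1 : ContDiffOn ℝ 1 (fun x =>
      u x - 2 * (derivWithin (derivWithin ω₁ (Set.Icc a b)) (Set.Icc a b) x / ω₁ x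
        - (derivWithin ω₁ (Set.Icc a b) x / ω₁ x) ^ 2)) (Set.Icc a b) := by
    refine hu.sub (contDiffOn_const.mul ((hw2.div (hω₁.of_le (by norm_num)) hω₁0).sub
      (((hw1.of_le (by norm_num)).div (hω₁.of_le (by norm_num)) hω₁0).pow 2)))
  have hUtc : ContinuousOn (fun x =>
      u x - 2 * (derivWithin (derivWithin ω₁ (Set.Icc a b)) (Set.Icc a b) x / ω₁ x
        - (derivWithin ω₁ (Set.Icc a b) x / ω₁ x) ^ 2)) (Set.Icc a b) := hUt1.continuousOn
  -- the key pointwise identity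
  have key : ∀ w : Fin 2 → ℝ, ((Q - M) * (Qt + M)).mulVec w
      = ((κ ^ 2 - μ ^ 2) • (1 : Matrix (Fin 2) (Fin 2) ℝ)).mulVec w := by
    intro w
    obtain ⟨ψt, hψt2, hψteq, hψtbd⟩ := hQtsurj w
    have hψta : ψt a = w 0 := by have := congrFun hψtbd 0; simpa using this
    have hψtb : ψt b = w 1 := by have := congrFun hψtbd 1; simpa using this
    have hp1 : ContDiffOn ℝ 1 (derivWithin ψt (Set.Icc a b)) (Set.Icc a b) :=
      hψt2.derivWithin hd (by norm_num)
    have hp2c : ContinuousOn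
        (derivWithin (derivWithin ψt (Set.Icc a b)) (Set.Icc a b)) (Set.Icc a b) :=
      hp1.continuousOn_derivWithin hd le_rfl
    -- F5 : within 2nd derivative of ψt via the continuous potential
    have F5 : ∀ x ∈ Set.Icc a b,
        derivWithin (derivWithin ψt (Set.Icc a b)) (Set.Icc a b) x
          = ((u x - 2 * (derivWithin (derivWithin ω₁ (Set.Icc a b)) (Set.Icc a b) x / ω₁ x
              - (derivWithin ω₁ (Set.Icc a b) x / ω₁ x) ^ 2)) - μ ^ 2) * ψt x := by
      refine eqOn_Icc_of_eqOn_Ioo hab hp2c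
        ((hUtc.sub continuousOn_const).mul hψt2.continuousOn) ?_
      intro x hx
      have hxs := Set.Ioo_subset_Icc_self hx
      have h1 := hψteq x hxs
      rw [deriv_eq_within₂ hx ψt, F4 x hxs] at h1
      linarith
    -- extension G of ψt
    obtain ⟨G, hGeq, hG2, hG1d, hG2d⟩ := exists_global_ext hab hψt2
    have hGode : ∀ x ∈ Set.Icc a b,
        -(deriv (deriv G) x)
          + (u x - 2 * (deriv (deriv ω₁) x / ω₁ x - (deriv ω₁ x / ω₁ x) ^ 2)) * G x
          = μ ^ 2 * G x := by
      intro x hx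
      rw [hG2d x hx, F4 x hx, hGeq hx, F5 x hx]
      ring
    have hQtG := hQtDN G hG2 hGode
    have hσ : ![derivWithin ψt (Set.Icc a b) a, derivWithin ψt (Set.Icc a b) b]
        = Qt.mulVec w := by
      calc ![derivWithin ψt (Set.Icc a b) a, derivWithin ψt (Set.Icc a b) b]
          = ![deriv G a, deriv G b] := by rw [hG1d a ha, hG1d b hb]
        _ = Qt.mulVec ![G a, G b] := hQtG
        _ = Qt.mulVec w := by rw [hGeq ha, hGeq hb, hψtbd]
    -- the Darboux transform of ψt
    have hω₁d : ∀ x ∈ Set.Icc a b,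
        HasDerivWithinAt ω₁ (derivWithin ω₁ (Set.Icc a b) x) (Set.Icc a b) x :=
      fun x hx => ((hω₁.differentiableOn (by norm_num)) x hx).hasDerivWithinAt
    have hw1d : ∀ x ∈ Set.Icc a b,
        HasDerivWithinAt (derivWithin ω₁ (Set.Icc a b))
          (derivWithin (derivWithin ω₁ (Set.Icc a b)) (Set.Icc a b) x) (Set.Icc a b) x :=
      fun x hx => ((hw1.differentiableOn (by norm_num)) x hx).hasDerivWithinAt
    have hψtd : ∀ x ∈ Set.Icc a b,
        HasDerivWithinAt ψt (derivWithin ψt (Set.Icc a b) x) (Set.Icc a b) x :=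
      fun x hx => ((hψt2.differentiableOn (by norm_num)) x hx).hasDerivWithinAt
    have hp1d : ∀ x ∈ Set.Icc a b,
        HasDerivWithinAt (derivWithin ψt (Set.Icc a b))
          (derivWithin (derivWithin ψt (Set.Icc a b)) (Set.Icc a b) x) (Set.Icc a b) x :=
      fun x hx => ((hp1.differentiableOn one_ne_zero) x hx).hasDerivWithinAt
    have hmd : ∀ x ∈ Set.Icc a b,
        HasDerivWithinAt (fun y => derivWithin ω₁ (Set.Icc a b) y / ω₁ y)
          ((derivWithin (derivWithin ω₁ (Set.Icc a b)) (Set.Icc a b) x * ω₁ x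
            - derivWithin ω₁ (Set.Icc a b) x * derivWithin ω₁ (Set.Icc a b) x) / (ω₁ x) ^ 2)
          (Set.Icc a b) x :=
      fun x hx => (hw1d x hx).div (hω₁d x hx) (hω₁0 x hx)
    -- φ and φ'
    have hφd : ∀ x ∈ Set.Icc a b,
        HasDerivWithinAt
          (fun y => derivWithin ψt (Set.Icc a b) y + (derivWithin ω₁ (Set.Icc a b) y / ω₁ y) * ψt y)
          ((κ ^ 2 - μ ^ 2) * ψt x + (derivWithin ω₁ (Set.Icc a b) x / ω₁ x) *
            (derivWithin ψt (Set.Icc a b) x + (derivWithin ω₁ (Set.Icc a b) x / ω₁ x) * ψt x))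
          (Set.Icc a b) x := by
      intro x hx
      have h := (hp1d x hx).add ((hmd x hx).mul (hψtd x hx))
      refine h.congr_deriv ?_
      rw [F5 x hx, F1 x hx]
      have hW := hω₁0 x hx
      field_simp
      ring
    have hφ'd : ∀ x ∈ Set.Icc a b,
        HasDerivWithinAt
          (fun y => (κ ^ 2 - μ ^ 2) * ψt y + (derivWithin ω₁ (Set.Icc a b) y / ω₁ y) *
            (derivWithin ψt (Set.Icc a b) y + (derivWithin ω₁ (Set.Icc a b) y / ω₁ y) * ψt y))
          ((u x - μ ^ 2) * (derivWithin ψt (Set.Icc a b) x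
            + (derivWithin ω₁ (Set.Icc a b) x / ω₁ x) * ψt x))
          (Set.Icc a b) x := by
      intro x hx
      have h := ((hψtd x hx).const_mul (κ ^ 2 - μ ^ 2)).add ((hmd x hx).mul (hφd x hx))
      refine h.congr_deriv ?_
      rw [F1 x hx]
      have hW := hω₁0 x hx
      field_simp
      ring
    -- smoothness of φ
    have hp2C1 : ContDiffOn ℝ 1
        (derivWithin (derivWithin ψt (Set.Icc a b)) (Set.Icc a b)) (Set.Icc a b) := by
      have h1 : ContDiffOn ℝ 1 (fun x =>
          ((u x - 2 * (derivWithin (derivWithin ω₁ (Set.Icc a b)) (Set.Icc a b) x / ω₁ x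
            - (derivWithin ω₁ (Set.Icc a b) x / ω₁ x) ^ 2)) - μ ^ 2) * ψt x) (Set.Icc a b) :=
        (hUt1.sub contDiffOn_const).mul (hψt2.of_le (by norm_num))
      exact h1.congr F5
    have hp1C2 : ContDiffOn ℝ 2 (derivWithin ψt (Set.Icc a b)) (Set.Icc a b) := by
      have h2 : ContDiffOn ℝ (1 + 1) (derivWithin ψt (Set.Icc a b)) (Set.Icc a b) :=
        (contDiffOn_succ_iff_derivWithin hd).mpr
          ⟨hp1.differentiableOn one_ne_zero, by simp, hp2C1⟩
      have : ((1 : WithTop ℕ∞) + 1) = 2 := by norm_num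
      rwa [this] at h2
    have hφ2 : ContDiffOn ℝ 2
        (fun y => derivWithin ψt (Set.Icc a b) y
          + (derivWithin ω₁ (Set.Icc a b) y / ω₁ y) * ψt y) (Set.Icc a b) :=
      hp1C2.add (((hw1.div (hω₁.of_le (by norm_num)) hω₁0)).mul hψt2)
    -- within-derivatives of φ
    have hφw : ∀ x ∈ Set.Icc a b,
        derivWithin (fun y => derivWithin ψt (Set.Icc a b) y
          + (derivWithin ω₁ (Set.Icc a b) y / ω₁ y) * ψt y) (Set.Icc a b) x
        = (κ ^ 2 - μ ^ 2) * ψt x + (derivWithin ω₁ (Set.Icc a b) x / ω₁ x) *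
            (derivWithin ψt (Set.Icc a b) x + (derivWithin ω₁ (Set.Icc a b) x / ω₁ x) * ψt x) :=
      fun x hx => (hφd x hx).derivWithin (hd x hx)
    have hφw2 : ∀ x ∈ Set.Icc a b,
        derivWithin (derivWithin (fun y => derivWithin ψt (Set.Icc a b) y
          + (derivWithin ω₁ (Set.Icc a b) y / ω₁ y) * ψt y) (Set.Icc a b)) (Set.Icc a b) x
        = (u x - μ ^ 2) * (derivWithin ψt (Set.Icc a b) x
            + (derivWithin ω₁ (Set.Icc a b) x / ω₁ x) * ψt x) := by
      intro x hx
      rw [derivWithin_congr hφw (hφw x hx)]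
      exact (hφ'd x hx).derivWithin (hd x hx)
    -- extension H of φ
    obtain ⟨H, hHeq, hH2, hH1d, hH2d⟩ := exists_global_ext hab hφ2
    have hHode : ∀ x ∈ Set.Icc a b,
        -(deriv (deriv H) x) + u x * H x = μ ^ 2 * H x := by
      intro x hx
      rw [hH2d x hx, hφw2 x hx, hHeq hx]
      ring
    have hQH := hQDN H hH2 hHode
    have hφbd : ![(κ ^ 2 - μ ^ 2) * ψt a + (derivWithin ω₁ (Set.Icc a b) a / ω₁ a) *
            (derivWithin ψt (Set.Icc a b) a + (derivWithin ω₁ (Set.Icc a b) a / ω₁ a) * ψt a),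
          (κ ^ 2 - μ ^ 2) * ψt b + (derivWithin ω₁ (Set.Icc a b) b / ω₁ b) *
            (derivWithin ψt (Set.Icc a b) b + (derivWithin ω₁ (Set.Icc a b) b / ω₁ b) * ψt b)]
        = Q.mulVec ![derivWithin ψt (Set.Icc a b) a
              + (derivWithin ω₁ (Set.Icc a b) a / ω₁ a) * ψt a,
            derivWithin ψt (Set.Icc a b) b
              + (derivWithin ω₁ (Set.Icc a b) b / ω₁ b) * ψt b] := by
      calc _ = ![deriv H a, deriv H b] := by
              rw [hH1d a ha, hH1d b hb, hφw a ha, hφw b hb]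
        _ = Q.mulVec ![H a, H b] := hQH
        _ = _ := by rw [hHeq ha, hHeq hb]
    -- vector algebra
    have hMv : ∀ v : Fin 2 → ℝ,
        M.mulVec v = ![deriv ω₁ a / ω₁ a * v 0, deriv ω₁ b / ω₁ b * v 1] := by
      intro v
      funext i
      rw [hM]
      fin_cases i <;> simp [Matrix.mulVec_diagonal]
    have hQtMw : (Qt + M).mulVec w
        = ![derivWithin ψt (Set.Icc a b) a + (derivWithin ω₁ (Set.Icc a b) a / ω₁ a) * ψt a,
            derivWithin ψt (Set.Icc a b) b + (derivWithin ω₁ (Set.Icc a b) b / ω₁ b) * ψt b] := by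
      rw [Matrix.add_mulVec, ← hσ, hMv w]
      funext i
      fin_cases i <;>
        simp [hS0a, hS0b, hψta, hψtb]
    rw [← Matrix.mulVec_mulVec, hQtMw, Matrix.sub_mulVec, ← hφbd, hMv, Matrix.smul_mulVec,
      Matrix.one_mulVec]
    funext i
    fin_cases i <;>
      simp [hS0a, hS0b, hψta, hψtb]
  -- assemble the matrix identity
  have hmat : (Q - M) * (Qt + M) = (κ ^ 2 - μ ^ 2) • (1 : Matrix (Fin 2) (Fin 2) ℝ) := by
    ext i j
    have := congrFun (key (Pi.single j 1)) i
    simpa using this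
  have hQdet : IsUnit Q.det := (Matrix.isUnit_iff_isUnit_det Q).mp hQunit
  have hfac : Q - M = (1 - M * Q⁻¹) * Q := by
    rw [sub_mul, one_mul, mul_assoc, Matrix.nonsing_inv_mul Q hQdet, mul_one]
  have hQMunit : IsUnit (Q - M) := by rw [hfac]; exact hMQ.mul hQunit
  have hQMdet : IsUnit (Q - M).det := (Matrix.isUnit_iff_isUnit_det _).mp hQMunit
  have h5 : Qt + M = (κ ^ 2 - μ ^ 2) • (Q - M)⁻¹ := by
    have h6 := congrArg (fun A => (Q - M)⁻¹ * A) hmat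
    rw [← mul_assoc, Matrix.nonsing_inv_mul _ hQMdet, one_mul] at h6
    rw [h6, Matrix.mul_smul, mul_one]
  have h7 : (Q - M)⁻¹ = Q⁻¹ * (1 - M * Q⁻¹)⁻¹ := by
    rw [hfac, Matrix.mul_inv_rev]
  rw [h7] at h5
  rw [← h5]
  abel
end
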